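/- arXiv:2201.07427 — 6 statements merged into one kernel-verified Lean document; each statement's English description precedes it below -/
import Mathlib

section
/- Let r : E₁ → ℝ and s : E₂ → ℝ be differentiable and 1-strongly convex. Let F : E₁ → ℝ and H : E₂ → ℝ be convex functions admitting a subgradient at every point, with F relatively μx-strongly convex with respect to V^r and H relatively μy-strongly convex with respect to V^s, where μx, μy > 0. Let A : E₁ → E₂ be a bounded linear operator, define φ(x,y) := F(x) + ⟨y, A x⟩ − H(y), and let (x*, y*) be a saddle point of φ on E₁ × E₂. Fix ηx, ηy > 0 and suppose the sequences (x_k)_{k≥0}, (y_k)_{k≥0} satisfy the proximal point rule: for every k ≥ 0, x_{k+1} is a global minimizer of x ↦ ⟨Aᵀ y_{k+1}, x⟩ + (1/ηx) V^r_{x_k}(x) + F(x), and y_{k+1} is a global minimizer of y ↦ −⟨A x_{k+1}, y⟩ + (1/ηy) V^s_{y_k}(y) + H(y). Then, with κ := 1/min(μx ηx, μy ηy), for every K ≥ 0: ‖x* − x_K‖²/ηx + ‖y* − y_K‖²/ηy ≤ 2 exp(−K/(1+κ)) · (V^r_{x₀}(x*)/ηx + V^s_{y₀}(y*)/ηy).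 -/
/-- Bregman divergence V^r_x(x') = r(x') − r(x) − ⟨∇r(x), x' − x⟩,
given a gradient function `r'` for `r`. -/
noncomputable def breg {E : Type*} [NormedAddCommGroup E] [InnerProductSpace ℝ E]
    (r : E → ℝ) (r' : E → E) (x x' : E) : ℝ :=
  r x' - r x - (inner ℝ (r' x) (x' - x) : ℝ)


open Filter Topology

lemma dirDeriv {E : Type*} [NormedAddCommGroup E] [InnerProductSpace ℝ E] [CompleteSpace E]
    (r : E → ℝ) (g u v : E) (h : HasGradientAt r g u) :
    Tendsto (fun t : ℝ => (r (u + t • v) - r u) / t) (𝓝[>] (0:ℝ))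
      (𝓝 (inner ℝ g v : ℝ)) := by
  have hL : HasDerivAt (fun t : ℝ => u + t • v) v 0 := by
    simpa using ((hasDerivAt_id (0:ℝ)).smul_const v).const_add u
  have hc : HasDerivAt (fun t : ℝ => r (u + t • v)) ((inner ℝ g v : ℝ)) 0 := by
    have h' : HasFDerivAt r ((InnerProductSpace.toDual ℝ E) g) (u + (0:ℝ) • v) := by
      simpa using h.hasFDerivAt
    have := h'.comp_hasDerivAt 0 hL
    simp at this
    exact this
  have h2 : Tendsto (slope (fun t : ℝ => r (u + t • v)) 0) (𝓝[>] (0:ℝ))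
      (𝓝 (inner ℝ g v : ℝ)) :=
    (hasDerivAt_iff_tendsto_slope.mp hc).mono_left
      (nhdsWithin_mono _ (fun t ht => ne_of_gt ht))
  apply h2.congr
  intro t
  simp [slope_def_field]

lemma convGradLB {E : Type*} [NormedAddCommGroup E] [InnerProductSpace ℝ E] [CompleteSpace E]
    (h : E → ℝ) (g : E → E) (hgrad : ∀ x, HasGradientAt h (g x) x)
    (hconv : ConvexOn ℝ Set.univ h) (u z : E) :
    h u + (inner ℝ (g u) (z - u) : ℝ) ≤ h z := by
  have hlim := dirDeriv h (g u) u (z - u) (hgrad u)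
  have hev : ∀ᶠ t in 𝓝[>] (0:ℝ), (h (u + t • (z - u)) - h u) / t ≤ h z - h u := by
    filter_upwards [Ioo_mem_nhdsGT_of_mem (Set.mem_Ico.mpr ⟨le_refl (0:ℝ), one_pos⟩)]
      with t ht
    obtain ⟨ht0, ht1⟩ := ht
    have hcomb : u + t • (z - u) = (1 - t) • u + t • z := by module
    have := hconv.2 (Set.mem_univ u) (Set.mem_univ z)
      (by linarith : (0:ℝ) ≤ 1 - t) (le_of_lt ht0) (by ring)
    rw [div_le_iff₀ ht0]
    calc h (u + t • (z - u)) - h u ≤ (1 - t) * h u + t * h z - h u := by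
          rw [hcomb]; simpa [smul_eq_mul] using this
      _ = (h z - h u) * t := by ring
  have := le_of_tendsto hlim hev
  linarith

lemma proxSubgrad {E : Type*} [NormedAddCommGroup E] [InnerProductSpace ℝ E] [CompleteSpace E]
    (r : E → ℝ) (r' : E → E) (hrgrad : ∀ x, HasGradientAt r (r' x) x)
    (F : E → ℝ) (hF : ConvexOn ℝ Set.univ F) (c : E) (lam : ℝ) (hlam : 0 ≤ lam) (x0 u : E)
    (hmin : ∀ z, (inner ℝ c u : ℝ) + lam * breg r r' x0 u + F u
      ≤ (inner ℝ c z : ℝ) + lam * breg r r' x0 z + F z) :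
    ∀ z, F u + (inner ℝ (-c - lam • (r' u - r' x0)) (z - u) : ℝ) ≤ F z := by
  intro z
  set v := z - u with hv
  have hlim := (dirDeriv r (r' u) u v (hrgrad u)).const_mul (-lam)
  have hev : ∀ᶠ t in 𝓝[>] (0:ℝ), -lam * ((r (u + t • v) - r u) / t)
      ≤ (inner ℝ c v : ℝ) - lam * (inner ℝ (r' x0) v : ℝ) + F z - F u := by
    filter_upwards [Ioo_mem_nhdsGT_of_mem (Set.mem_Ico.mpr ⟨le_refl (0:ℝ), one_pos⟩)]
      with t ht
    obtain ⟨ht0, ht1⟩ := ht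
    have hFt : F (u + t • v) - F u ≤ t * (F z - F u) := by
      have hcomb : u + t • v = (1 - t) • u + t • z := by rw [hv]; module
      have := hF.2 (Set.mem_univ u) (Set.mem_univ z)
        (by linarith : (0:ℝ) ≤ 1 - t) (le_of_lt ht0) (by ring)
      simp only [smul_eq_mul] at this
      rw [hcomb]; nlinarith [this]
    have hmin' := hmin (u + t • v)
    have hbreg : breg r r' x0 (u + t • v) - breg r r' x0 u
        = r (u + t • v) - r u - t * (inner ℝ (r' x0) v : ℝ) := by
      simp only [breg]
      have h1 : u + t • v - x0 = (u - x0) + t • v := by module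
      rw [h1, inner_add_right, inner_smul_right]
      ring
    have hinner : (inner ℝ c (u + t • v) : ℝ) - (inner ℝ c u : ℝ) = t * (inner ℝ c v : ℝ) := by
      rw [inner_add_right, inner_smul_right]; ring
    have hQ : (r (u + t • v) - r u) / t * t = r (u + t • v) - r u :=
      div_mul_cancel₀ _ (ne_of_gt ht0)
    nlinarith [hmin', hbreg, hinner, hFt, hQ, ht0, hlam]
  have hfin := le_of_tendsto hlim hev
  have hexp : (inner ℝ (-c - lam • (r' u - r' x0)) v : ℝ)
      = -(inner ℝ c v : ℝ) - lam * ((inner ℝ (r' u) v : ℝ) - (inner ℝ (r' x0) v : ℝ)) := by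
    rw [inner_sub_left, inner_neg_left, inner_smul_left, inner_sub_left]
    norm_num
  rw [hexp]
  linarith

lemma gradNormSq {E : Type*} [NormedAddCommGroup E] [InnerProductSpace ℝ E] [CompleteSpace E]
    (x : E) : HasGradientAt (fun y : E => 1 / 2 * ‖y‖ ^ 2) x x := by
  rw [hasGradientAt_iff_hasFDerivAt]
  have h1 : HasFDerivAt (fun y : E => (inner ℝ y y : ℝ))
      ((fderivInnerCLM ℝ (x, x)).comp
        ((ContinuousLinearMap.id ℝ E).prod (ContinuousLinearMap.id ℝ E))) x :=
    (hasFDerivAt_id x).inner ℝ (hasFDerivAt_id x)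
  have h2 := h1.const_smul (R := ℝ) (1/2 : ℝ)
  have hfun : (fun y : E => (1/2 : ℝ) • (inner ℝ y y : ℝ)) = fun y : E => 1 / 2 * ‖y‖ ^ 2 := by
    funext y; rw [smul_eq_mul, real_inner_self_eq_norm_sq]
  have hclm : (1/2 : ℝ) • ((fderivInnerCLM ℝ (x, x)).comp
        ((ContinuousLinearMap.id ℝ E).prod (ContinuousLinearMap.id ℝ E)))
      = InnerProductSpace.toDual ℝ E x := by
    ext y
    simp [fderivInnerCLM_apply, real_inner_comm]
    ring
  rw [← hclm, ← hfun]
  exact h2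

lemma bregLB {E : Type*} [NormedAddCommGroup E] [InnerProductSpace ℝ E] [CompleteSpace E]
    (r : E → ℝ) (r' : E → E) (hrgrad : ∀ x, HasGradientAt r (r' x) x)
    (hrsc : ConvexOn ℝ Set.univ (fun x => r x - 1 / 2 * ‖x‖ ^ 2)) (a b : E) :
    1 / 2 * ‖b - a‖ ^ 2 ≤ breg r r' a b := by
  have hg : ∀ w : E, HasGradientAt (fun w : E => r w - 1 / 2 * ‖w‖ ^ 2) (r' w - w) w := by
    intro w
    rw [hasGradientAt_iff_hasFDerivAt]
    have := (hrgrad w).hasFDerivAt.sub (gradNormSq w).hasFDerivAt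
    rwa [← map_sub (InnerProductSpace.toDual ℝ E)] at this
  have h := convGradLB _ (fun w => r' w - w) hg hrsc a b
  simp only [inner_sub_left] at h
  have h1 : (inner ℝ a (b - a) : ℝ) = (inner ℝ a b : ℝ) - ‖a‖ ^ 2 := by
    rw [inner_sub_right, real_inner_self_eq_norm_sq]
  have h2 : ‖b - a‖ ^ 2 = ‖b‖ ^ 2 - 2 * (inner ℝ b a : ℝ) + ‖a‖ ^ 2 := norm_sub_sq_real b a
  have h3 : (inner ℝ b a : ℝ) = (inner ℝ a b : ℝ) := real_inner_comm a b
  simp only [breg]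
  nlinarith [h, h1, h2, h3]

lemma threePoint {E : Type*} [NormedAddCommGroup E] [InnerProductSpace ℝ E]
    (r : E → ℝ) (r' : E → E) (xk u z : E) :
    (inner ℝ (r' u - r' xk) (z - u) : ℝ)
      = breg r r' xk z - breg r r' u z - breg r r' xk u := by
  simp only [breg, inner_sub_left, inner_sub_right]
  ring

set_option maxHeartbeats 1000000 in
/-- linear convergence of the proximal point method for the
bilinearly coupled minimax problem min_x max_y F(x) + ⟨y, Ax⟩ − H(y). -/
theorem stmt0 {E₁ E₂ : Type*}
    [NormedAddCommGroup E₁] [InnerProductSpace ℝ E₁] [CompleteSpace E₁]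
    [NormedAddCommGroup E₂] [InnerProductSpace ℝ E₂] [CompleteSpace E₂]
    -- r, s differentiable and 1-strongly convex
    (r : E₁ → ℝ) (r' : E₁ → E₁) (s : E₂ → ℝ) (s' : E₂ → E₂)
    (hrgrad : ∀ x, HasGradientAt r (r' x) x)
    (hsgrad : ∀ y, HasGradientAt s (s' y) y)
    (hrsc : ConvexOn ℝ Set.univ (fun x => r x - 1 / 2 * ‖x‖ ^ 2))
    (hssc : ConvexOn ℝ Set.univ (fun y => s y - 1 / 2 * ‖y‖ ^ 2))
    -- F, H convex with subgradients everywhere, relatively strongly convex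
    (F : E₁ → ℝ) (H : E₂ → ℝ) (μx μy : ℝ) (hμx : 0 < μx) (hμy : 0 < μy)
    (hFconv : ConvexOn ℝ Set.univ F) (hHconv : ConvexOn ℝ Set.univ H)
    (hFsub : ∀ x : E₁, ∃ g : E₁, ∀ z, F x + (inner ℝ g (z - x) : ℝ) ≤ F z)
    (hHsub : ∀ y : E₂, ∃ g : E₂, ∀ z, H y + (inner ℝ g (z - y) : ℝ) ≤ H z)
    (hFrel : ∀ x x' : E₁, ∀ g : E₁, (∀ z, F x + (inner ℝ g (z - x) : ℝ) ≤ F z) →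
      F x + (inner ℝ g (x' - x) : ℝ) + μx * breg r r' x x' ≤ F x')
    (hHrel : ∀ y y' : E₂, ∀ g : E₂, (∀ z, H y + (inner ℝ g (z - y) : ℝ) ≤ H z) →
      H y + (inner ℝ g (y' - y) : ℝ) + μy * breg s s' y y' ≤ H y')
    -- bilinear coupling and saddle point of φ(x,y) = F(x) + ⟨y, Ax⟩ − H(y)
    (A : E₁ →L[ℝ] E₂) (xstar : E₁) (ystar : E₂)
    (hsaddle : ∀ (x : E₁) (y : E₂),
      F xstar + (inner ℝ y (A xstar) : ℝ) - H y
          ≤ F xstar + (inner ℝ ystar (A xstar) : ℝ) - H ystar ∧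
      F xstar + (inner ℝ ystar (A xstar) : ℝ) - H ystar
          ≤ F x + (inner ℝ ystar (A x) : ℝ) - H ystar)
    -- step sizes and the proximal point iterates
    (ηx ηy : ℝ) (hηx : 0 < ηx) (hηy : 0 < ηy)
    (x : ℕ → E₁) (y : ℕ → E₂)
    (hxmin : ∀ k : ℕ, ∀ z : E₁,
      (inner ℝ ((ContinuousLinearMap.adjoint A) (y (k + 1))) (x (k + 1)) : ℝ)
          + 1 / ηx * breg r r' (x k) (x (k + 1)) + F (x (k + 1))
        ≤ (inner ℝ ((ContinuousLinearMap.adjoint A) (y (k + 1))) z : ℝ)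
          + 1 / ηx * breg r r' (x k) z + F z)
    (hymin : ∀ k : ℕ, ∀ w : E₂,
      -(inner ℝ (A (x (k + 1))) (y (k + 1)) : ℝ)
          + 1 / ηy * breg s s' (y k) (y (k + 1)) + H (y (k + 1))
        ≤ -(inner ℝ (A (x (k + 1))) w : ℝ)
          + 1 / ηy * breg s s' (y k) w + H w) :
    ∀ K : ℕ,
      ‖xstar - x K‖ ^ 2 / ηx + ‖ystar - y K‖ ^ 2 / ηy
        ≤ 2 * Real.exp (-(K : ℝ) / (1 + 1 / min (μx * ηx) (μy * ηy)))
          * (breg r r' (x 0) xstar / ηx + breg s s' (y 0) ystar / ηy) := by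
  have hηx' : (0:ℝ) < 1/ηx := by positivity
  have hηy' : (0:ℝ) < 1/ηy := by positivity
  have hbregr : ∀ a b : E₁, 0 ≤ breg r r' a b := fun a b =>
    le_trans (by positivity) (bregLB r r' hrgrad hrsc a b)
  have hbregs : ∀ a b : E₂, 0 ≤ breg s s' a b := fun a b =>
    le_trans (by positivity) (bregLB s s' hsgrad hssc a b)
  -- one-step inequality
  have hstep : ∀ k : ℕ,
      1/ηx * breg r r' (x (k+1)) xstar + μx * breg r r' (x (k+1)) xstar
        + (1/ηy * breg s s' (y (k+1)) ystar + μy * breg s s' (y (k+1)) ystar)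
      ≤ 1/ηx * breg r r' (x k) xstar + 1/ηy * breg s s' (y k) ystar := by
    intro k
    set u := x (k+1) with hu
    set v := y (k+1) with hvv
    have hgx := proxSubgrad r r' hrgrad F hFconv ((ContinuousLinearMap.adjoint A) v)
      (1/ηx) (le_of_lt hηx') (x k) u (hxmin k)
    have hFx := hFrel u xstar _ hgx
    have e1 : (inner ℝ (-((ContinuousLinearMap.adjoint A) v)
          - (1/ηx) • (r' u - r' (x k))) (xstar - u) : ℝ)
        = -((inner ℝ v (A xstar) : ℝ)) + (inner ℝ v (A u) : ℝ)
          - 1/ηx * (breg r r' (x k) xstar - breg r r' u xstar - breg r r' (x k) u) := by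
      rw [inner_sub_left, inner_neg_left, real_inner_smul_left, threePoint,
        ContinuousLinearMap.adjoint_inner_left, map_sub, inner_sub_right]
      ring
    rw [e1] at hFx
    have hymin' : ∀ w, (inner ℝ (-(A u)) v : ℝ) + 1/ηy * breg s s' (y k) v + H v
        ≤ (inner ℝ (-(A u)) w : ℝ) + 1/ηy * breg s s' (y k) w + H w := by
      intro w
      simpa [inner_neg_left] using hymin k w
    have hgy := proxSubgrad s s' hsgrad H hHconv (-(A u)) (1/ηy) (le_of_lt hηy')
      (y k) v hymin'
    have hHy := hHrel v ystar _ hgy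
    have e2 : (inner ℝ (-(-(A u)) - (1/ηy) • (s' v - s' (y k))) (ystar - v) : ℝ)
        = (inner ℝ (A u) ystar : ℝ) - (inner ℝ (A u) v : ℝ)
          - 1/ηy * (breg s s' (y k) ystar - breg s s' v ystar - breg s s' (y k) v) := by
      rw [inner_sub_left, inner_neg_left, inner_neg_left, real_inner_smul_left, threePoint,
        inner_sub_right]
      ring
    rw [e2] at hHy
    have hs1 := (hsaddle u v).1
    have hs2 := (hsaddle u v).2
    have c1 : (inner ℝ (A u) ystar : ℝ) = (inner ℝ ystar (A u) : ℝ) := real_inner_comm _ _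
    have c2 : (inner ℝ (A u) v : ℝ) = (inner ℝ v (A u) : ℝ) := real_inner_comm _ _
    have hp := hbregr (x k) u
    have hq := hbregs (y k) v
    nlinarith [hFx, hHy, hs1, hs2, hp, hq, hηx', hηy', c1, c2,
      mul_le_mul_of_nonneg_right (le_of_lt hηx') hp,
      mul_le_mul_of_nonneg_right (le_of_lt hηy') hq]
  -- contraction factor
  set δ := min (μx * ηx) (μy * ηy) with hδdef
  have hδ : 0 < δ := lt_min (by positivity) (by positivity)
  have h1δ : (0:ℝ) < 1 + δ := by linarith
  have hcontr : ∀ k : ℕ,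
      (1 + δ) * (breg r r' (x (k+1)) xstar / ηx + breg s s' (y (k+1)) ystar / ηy)
        ≤ breg r r' (x k) xstar / ηx + breg s s' (y k) ystar / ηy := by
    intro k
    have h1 : δ ≤ μx * ηx := min_le_left _ _
    have h2 : δ ≤ μy * ηy := min_le_right _ _
    have hst := hstep k
    have ha1 := hbregr (x (k+1)) xstar
    have hb1 := hbregs (y (k+1)) ystar
    have key1 : δ * (breg r r' (x (k+1)) xstar / ηx) ≤ μx * breg r r' (x (k+1)) xstar := by
      rw [mul_div_assoc', div_le_iff₀ hηx]
      nlinarith [mul_le_mul_of_nonneg_right h1 ha1]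
    have key2 : δ * (breg s s' (y (k+1)) ystar / ηy) ≤ μy * breg s s' (y (k+1)) ystar := by
      rw [mul_div_assoc', div_le_iff₀ hηy]
      nlinarith [mul_le_mul_of_nonneg_right h2 hb1]
    have ed1 : breg r r' (x (k+1)) xstar / ηx = 1/ηx * breg r r' (x (k+1)) xstar := by ring
    have ed2 : breg s s' (y (k+1)) ystar / ηy = 1/ηy * breg s s' (y (k+1)) ystar := by ring
    have ed3 : breg r r' (x k) xstar / ηx = 1/ηx * breg r r' (x k) xstar := by ring
    have ed4 : breg s s' (y k) ystar / ηy = 1/ηy * breg s s' (y k) ystar := by ring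
    nlinarith [hst, key1, key2, ed1, ed2, ed3, ed4]
  -- geometric decay
  have hdecay : ∀ K : ℕ,
      breg r r' (x K) xstar / ηx + breg s s' (y K) ystar / ηy
        ≤ (1/(1+δ))^K * (breg r r' (x 0) xstar / ηx + breg s s' (y 0) ystar / ηy) := by
    intro K
    induction K with
    | zero => simp
    | succ k ih =>
      have h := hcontr k
      calc breg r r' (x (k+1)) xstar / ηx + breg s s' (y (k+1)) ystar / ηy
          = 1/(1+δ) * ((1+δ) * (breg r r' (x (k+1)) xstar / ηx
              + breg s s' (y (k+1)) ystar / ηy)) := by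
            field_simp
        _ ≤ 1/(1+δ) * (breg r r' (x k) xstar / ηx + breg s s' (y k) ystar / ηy) := by
            apply mul_le_mul_of_nonneg_left h (by positivity)
        _ ≤ 1/(1+δ) * ((1/(1+δ))^k
              * (breg r r' (x 0) xstar / ηx + breg s s' (y 0) ystar / ηy)) := by
            apply mul_le_mul_of_nonneg_left ih (by positivity)
        _ = (1/(1+δ))^(k+1) * (breg r r' (x 0) xstar / ηx + breg s s' (y 0) ystar / ηy) := by
            ring
  -- exponential bound on the ratio
  have hratio : ∀ K : ℕ, (1/(1+δ))^K ≤ Real.exp (-(K:ℝ)/(1 + 1/δ)) := by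
    intro K
    have e0 := Real.add_one_le_exp (-(1/(1 + 1/δ)))
    have hcpos : (0:ℝ) < 1 + 1/δ := by positivity
    have e1 : 1/(1+δ) = 1 - 1/(1 + 1/δ) := by
      field_simp
      ring
    have e2 : 1/(1+δ) ≤ Real.exp (-(1/(1 + 1/δ))) := by
      rw [e1]; linarith
    calc (1/(1+δ))^K ≤ (Real.exp (-(1/(1 + 1/δ))))^K :=
          pow_le_pow_left₀ (by positivity) e2 K
      _ = Real.exp ((K:ℝ) * (-(1/(1 + 1/δ)))) := by
          rw [Real.exp_nat_mul]
      _ = Real.exp (-(K:ℝ)/(1 + 1/δ)) := by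
          congr 1
          field_simp
  -- finish
  intro K
  have hΘ0 : 0 ≤ breg r r' (x 0) xstar / ηx + breg s s' (y 0) ystar / ηy :=
    add_nonneg (div_nonneg (hbregr _ _) hηx.le) (div_nonneg (hbregs _ _) hηy.le)
  have hxK := bregLB r r' hrgrad hrsc (x K) xstar
  have hyK := bregLB s s' hsgrad hssc (y K) ystar
  have h2 : ‖xstar - x K‖ ^ 2 / ηx + ‖ystar - y K‖ ^ 2 / ηy
      ≤ 2 * (breg r r' (x K) xstar / ηx + breg s s' (y K) ystar / ηy) := by
    have d1 : ‖xstar - x K‖ ^ 2 / ηx ≤ 2 * breg r r' (x K) xstar / ηx := by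
      gcongr
      linarith
    have d2 : ‖ystar - y K‖ ^ 2 / ηy ≤ 2 * breg s s' (y K) ystar / ηy := by
      gcongr
      linarith
    have m1 : 2 * breg r r' (x K) xstar / ηx = 2 * (breg r r' (x K) xstar / ηx) := by ring
    have m2 : 2 * breg s s' (y K) ystar / ηy = 2 * (breg s s' (y K) ystar / ηy) := by ring
    linarith [d1, d2, m1.le, m2.le]
  have h3 : breg r r' (x K) xstar / ηx + breg s s' (y K) ystar / ηy
      ≤ Real.exp (-(K:ℝ)/(1 + 1/δ))
        * (breg r r' (x 0) xstar / ηx + breg s s' (y 0) ystar / ηy) :=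
    le_trans (hdecay K) (mul_le_mul_of_nonneg_right (hratio K) hΘ0)
  calc ‖xstar - x K‖ ^ 2 / ηx + ‖ystar - y K‖ ^ 2 / ηy
      ≤ 2 * (breg r r' (x K) xstar / ηx + breg s s' (y K) ystar / ηy) := h2
    _ ≤ 2 * (Real.exp (-(K:ℝ)/(1 + 1/δ))
          * (breg r r' (x 0) xstar / ηx + breg s s' (y 0) ystar / ηy)) := by
        linarith [h3]
    _ = 2 * Real.exp (-(K:ℝ)/(1 + 1/δ))
          * (breg r r' (x 0) xstar / ηx + breg s s' (y 0) ystar / ηy) := by ring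
end

section
/- Let r : E₁ → ℝ and s : E₂ → ℝ be differentiable and 1-strongly convex. Let F : E₁ → ℝ and H : E₂ → ℝ be convex functions admitting a subgradient at every point, with F relatively μx-strongly convex with respect to V^r and H relatively μy-strongly convex with respect to V^s, where μx, μy > 0. Let A : E₁ → E₂ be a bounded linear operator, define φ(x,y) := F(x) + ⟨y, A x⟩ − H(y), and let (x*, y*) be a saddle point of φ on E₁ × E₂. Fix ηx, ηy > 0 and points x₀ ∈ E₁, y₀ ∈ E₂. Suppose x₁ and y₁ satisfy the implicit proximal point step: x₁ is a global minimizer of x ↦ ⟨Aᵀ y₁, x⟩ + (1/ηx) V^r_{x₀}(x) + F(x), and y₁ is a global minimizer of y ↦ −⟨A x₁, y⟩ + (1/ηy) V^s_{y₀}(y) + H(y). Then 0 ≤ φ(x₁, y*) − φ(x*, y₁) ≤ (1/ηx) V^r_{x₀}(x*) − (1/ηx + μx) V^r_{x₁}(x*) + (1/ηy) V^s_{y₀}(y*) − (1/ηy + μy) V^s_{y₁}(y*). -/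
open Filter Topology

section helpers
variable {E : Type*} [NormedAddCommGroup E] [InnerProductSpace ℝ E] [CompleteSpace E]

lemma lineDeriv_of_gradient (r : E → ℝ) (g x v : E) (h : HasGradientAt r g x) :
    HasDerivAt (fun t : ℝ => r (x + t • v)) (inner ℝ g v : ℝ) 0 := by
  have hline : HasDerivAt (fun t : ℝ => x + t • v) v 0 := by
    simpa using ((hasDerivAt_id (0:ℝ)).smul_const v).const_add x
  have h2 : HasFDerivAt r (InnerProductSpace.toDual ℝ E g : E →L[ℝ] ℝ) (x + (0:ℝ) • v) := by
    simpa using h.hasFDerivAt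
  have := h2.comp_hasDerivAt (0:ℝ) hline
  simpa [InnerProductSpace.toDual_apply_apply, Function.comp_def] using this

omit [CompleteSpace E] in
lemma convex_combo_pt (x z : E) (t : ℝ) : (1 - t) • x + t • z = x + t • (z - x) := by
  simp [smul_sub, sub_smul]; abel

lemma grad_ineq (r : E → ℝ) (g x : E) (hconv : ConvexOn ℝ Set.univ r)
    (hg : HasGradientAt r g x) (z : E) : r x + (inner ℝ g (z - x) : ℝ) ≤ r z := by
  set v := z - x with hv
  have hlim : Tendsto (fun t : ℝ => t⁻¹ * (r (x + t • v) - r x)) (𝓝[>] 0)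
      (𝓝 (inner ℝ g v : ℝ)) := by
    simpa using (lineDeriv_of_gradient r g x v hg).tendsto_slope_zero_right
  have hev : ∀ᶠ t : ℝ in 𝓝[>] 0, t⁻¹ * (r (x + t • v) - r x) ≤ r z - r x := by
    filter_upwards [Ioo_mem_nhdsGT_of_mem (Set.mem_Ico.2 ⟨le_refl (0:ℝ), one_pos⟩)]
      with t ht
    have h1 : r (x + t • v) ≤ (1 - t) * r x + t * r z := by
      have := hconv.2 (Set.mem_univ x) (Set.mem_univ z)
        (show (0:ℝ) ≤ 1 - t by linarith [ht.2]) ht.1.le (by ring)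
      simpa [convex_combo_pt, hv, smul_eq_mul] using this
    rw [inv_mul_eq_div, div_le_iff₀ ht.1]
    nlinarith [ht.1]
  have := le_of_tendsto hlim hev
  linarith

lemma subgrad_of_min (φ F : E → ℝ) (g x : E)
    (hd : ∀ v : E, HasDerivAt (fun t : ℝ => φ (x + t • v)) (inner ℝ g v : ℝ) 0)
    (hF : ConvexOn ℝ Set.univ F)
    (hmin : ∀ z, φ x + F x ≤ φ z + F z) (z : E) :
    F x + (inner ℝ (-g) (z - x) : ℝ) ≤ F z := by
  set v := z - x with hv
  have hlim : Tendsto (fun t : ℝ => t⁻¹ * (φ (x + t • v) - φ x)) (𝓝[>] 0)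
      (𝓝 (inner ℝ g v : ℝ)) := by
    simpa using (hd v).tendsto_slope_zero_right
  have hev : ∀ᶠ t : ℝ in 𝓝[>] 0, -(F z - F x) ≤ t⁻¹ * (φ (x + t • v) - φ x) := by
    filter_upwards [Ioo_mem_nhdsGT_of_mem (Set.mem_Ico.2 ⟨le_refl (0:ℝ), one_pos⟩)]
      with t ht
    have h1 : F (x + t • v) ≤ (1 - t) * F x + t * F z := by
      have := hF.2 (Set.mem_univ x) (Set.mem_univ z)
        (show (0:ℝ) ≤ 1 - t by linarith [ht.2]) ht.1.le (by ring)
      simpa [convex_combo_pt, hv, smul_eq_mul] using this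
    have h0 := hmin (x + t • v)
    rw [inv_mul_eq_div, le_div_iff₀ ht.1]
    nlinarith [ht.1]
  have := ge_of_tendsto hlim hev
  have hinner : (inner ℝ (-g) (z - x) : ℝ) = -(inner ℝ g v : ℝ) := by simp [hv]
  linarith
end helpers

section bregfacts
variable {E : Type*} [NormedAddCommGroup E] [InnerProductSpace ℝ E] [CompleteSpace E]

lemma breg_nonneg (r : E → ℝ) (r' : E → E) (hconv : ConvexOn ℝ Set.univ r)
    (hg : ∀ x, HasGradientAt r (r' x) x) (x z : E) : 0 ≤ breg r r' x z := by
  have := grad_ineq r (r' x) x hconv (hg x) z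
  simp only [breg]; linarith

omit [CompleteSpace E] in
lemma breg_three_point (r : E → ℝ) (r' : E → E) (x₀ x₁ z : E) :
    (inner ℝ (r' x₁ - r' x₀) (z - x₁) : ℝ)
      = breg r r' x₀ z - breg r r' x₁ z - breg r r' x₀ x₁ := by
  simp only [breg, inner_sub_left, inner_sub_right]; ring

lemma breg_deriv (r : E → ℝ) (r' : E → E) (hg : ∀ x, HasGradientAt r (r' x) x)
    (x₀ x₁ v : E) (a : E) (c : ℝ) :
    HasDerivAt (fun t : ℝ => (inner ℝ a (x₁ + t • v) : ℝ) + c * breg r r' x₀ (x₁ + t • v))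
      (inner ℝ (a + c • (r' x₁ - r' x₀)) v : ℝ) 0 := by
  have hr1 : HasDerivAt (fun t : ℝ => r (x₁ + t • v)) (inner ℝ (r' x₁) v : ℝ) 0 :=
    lineDeriv_of_gradient r (r' x₁) x₁ v (hg x₁)
  have ha : ∀ b : E, HasDerivAt (fun t : ℝ => (inner ℝ b (x₁ + t • v) : ℝ))
      (inner ℝ b v : ℝ) 0 := by
    intro b
    have heq : (fun t : ℝ => (inner ℝ b (x₁ + t • v) : ℝ))
        = fun t : ℝ => (inner ℝ b x₁ : ℝ) + t * (inner ℝ b v : ℝ) := by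
      funext t; simp [inner_add_right, inner_smul_right]
    rw [heq]
    simpa using ((hasDerivAt_id (0:ℝ)).mul_const (inner ℝ b v : ℝ)).const_add
      (inner ℝ b x₁ : ℝ)
  have hb : HasDerivAt (fun t : ℝ => (inner ℝ (r' x₀) ((x₁ + t • v) - x₀) : ℝ))
      (inner ℝ (r' x₀) v : ℝ) 0 := by
    have heq : (fun t : ℝ => (inner ℝ (r' x₀) ((x₁ + t • v) - x₀) : ℝ))
        = fun t : ℝ => (inner ℝ (r' x₀) (x₁ + t • v) : ℝ) - (inner ℝ (r' x₀) x₀ : ℝ) := by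
      funext t; simp [inner_sub_right]
    rw [heq]
    simpa using (ha (r' x₀)).sub_const (inner ℝ (r' x₀) x₀ : ℝ)
  have htot := (ha a).add ((((hr1.sub_const (r x₀)).sub hb)).const_mul c)
  have hval : (inner ℝ a v : ℝ) + c * ((inner ℝ (r' x₁) v : ℝ) - (inner ℝ (r' x₀) v : ℝ))
      = (inner ℝ (a + c • (r' x₁ - r' x₀)) v : ℝ) := by
    simp [inner_add_left, real_inner_smul_left, inner_sub_left]
  simpa [breg, hval, Pi.add_def] using htot
end bregfacts
/-- one-step inequality for the implicit proximal point update on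
the bilinearly coupled minimax problem min_x max_y φ(x,y) = F(x) + ⟨y, Ax⟩ − H(y). -/
theorem stmt1 {E₁ E₂ : Type*}
    [NormedAddCommGroup E₁] [InnerProductSpace ℝ E₁] [CompleteSpace E₁]
    [NormedAddCommGroup E₂] [InnerProductSpace ℝ E₂] [CompleteSpace E₂]
    (r : E₁ → ℝ) (r' : E₁ → E₁) (s : E₂ → ℝ) (s' : E₂ → E₂)
    (hrgrad : ∀ x, HasGradientAt r (r' x) x)
    (hsgrad : ∀ y, HasGradientAt s (s' y) y)
    (hrsc : ConvexOn ℝ Set.univ (fun x => r x - 1 / 2 * ‖x‖ ^ 2))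
    (hssc : ConvexOn ℝ Set.univ (fun y => s y - 1 / 2 * ‖y‖ ^ 2))
    (F : E₁ → ℝ) (H : E₂ → ℝ) (μx μy : ℝ) (hμx : 0 < μx) (hμy : 0 < μy)
    (hFconv : ConvexOn ℝ Set.univ F) (hHconv : ConvexOn ℝ Set.univ H)
    (hFsub : ∀ x : E₁, ∃ g : E₁, ∀ z, F x + (inner ℝ g (z - x) : ℝ) ≤ F z)
    (hHsub : ∀ y : E₂, ∃ g : E₂, ∀ z, H y + (inner ℝ g (z - y) : ℝ) ≤ H z)
    (hFrel : ∀ x x' : E₁, ∀ g : E₁, (∀ z, F x + (inner ℝ g (z - x) : ℝ) ≤ F z) →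
      F x + (inner ℝ g (x' - x) : ℝ) + μx * breg r r' x x' ≤ F x')
    (hHrel : ∀ y y' : E₂, ∀ g : E₂, (∀ z, H y + (inner ℝ g (z - y) : ℝ) ≤ H z) →
      H y + (inner ℝ g (y' - y) : ℝ) + μy * breg s s' y y' ≤ H y')
    (A : E₁ →L[ℝ] E₂) (xstar : E₁) (ystar : E₂)
    (hsaddle : ∀ (x : E₁) (y : E₂),
      F xstar + (inner ℝ y (A xstar) : ℝ) - H y
          ≤ F xstar + (inner ℝ ystar (A xstar) : ℝ) - H ystar ∧
      F xstar + (inner ℝ ystar (A xstar) : ℝ) - H ystar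
          ≤ F x + (inner ℝ ystar (A x) : ℝ) - H ystar)
    (ηx ηy : ℝ) (hηx : 0 < ηx) (hηy : 0 < ηy)
    (x₀ : E₁) (y₀ : E₂) (x₁ : E₁) (y₁ : E₂)
    (hxmin : ∀ z : E₁,
      (inner ℝ ((ContinuousLinearMap.adjoint A) y₁) x₁ : ℝ)
          + 1 / ηx * breg r r' x₀ x₁ + F x₁
        ≤ (inner ℝ ((ContinuousLinearMap.adjoint A) y₁) z : ℝ)
          + 1 / ηx * breg r r' x₀ z + F z)
    (hymin : ∀ w : E₂,
      -(inner ℝ (A x₁) y₁ : ℝ) + 1 / ηy * breg s s' y₀ y₁ + H y₁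
        ≤ -(inner ℝ (A x₁) w : ℝ) + 1 / ηy * breg s s' y₀ w + H w) :
    0 ≤ (F x₁ + (inner ℝ ystar (A x₁) : ℝ) - H ystar)
        - (F xstar + (inner ℝ y₁ (A xstar) : ℝ) - H y₁) ∧
    (F x₁ + (inner ℝ ystar (A x₁) : ℝ) - H ystar)
        - (F xstar + (inner ℝ y₁ (A xstar) : ℝ) - H y₁)
      ≤ 1 / ηx * breg r r' x₀ xstar - (1 / ηx + μx) * breg r r' x₁ xstar
        + 1 / ηy * breg s s' y₀ ystar - (1 / ηy + μy) * breg s s' y₁ ystar := by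
  have hrconv : ConvexOn ℝ Set.univ r := by
    have h := (strongConvexOn_iff_convex (m := 1) (f := r)).mpr (by simpa using hrsc)
    exact h.convexOn fun t => by positivity
  have hsconv : ConvexOn ℝ Set.univ s := by
    have h := (strongConvexOn_iff_convex (m := 1) (f := s)).mpr (by simpa using hssc)
    exact h.convexOn fun t => by positivity
  set gx := (ContinuousLinearMap.adjoint A) y₁ + (1/ηx) • (r' x₁ - r' x₀) with hgx
  set gy := -(A x₁) + (1/ηy) • (s' y₁ - s' y₀) with hgy
  have hdx : ∀ v : E₁, HasDerivAt (fun t : ℝ =>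
      (inner ℝ ((ContinuousLinearMap.adjoint A) y₁) (x₁ + t • v) : ℝ)
        + 1/ηx * breg r r' x₀ (x₁ + t • v)) (inner ℝ gx v : ℝ) 0 :=
    fun v => breg_deriv r r' hrgrad x₀ x₁ v _ (1/ηx)
  have hdy : ∀ v : E₂, HasDerivAt (fun t : ℝ =>
      (inner ℝ (-(A x₁)) (y₁ + t • v) : ℝ)
        + 1/ηy * breg s s' y₀ (y₁ + t • v)) (inner ℝ gy v : ℝ) 0 :=
    fun v => breg_deriv s s' hsgrad y₀ y₁ v _ (1/ηy)
  have hsubx : ∀ z, F x₁ + (inner ℝ (-gx) (z - x₁) : ℝ) ≤ F z := by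
    refine subgrad_of_min
      (fun z => (inner ℝ ((ContinuousLinearMap.adjoint A) y₁) z : ℝ)
        + 1/ηx * breg r r' x₀ z) F gx x₁ hdx hFconv (fun z => ?_)
    have := hxmin z; linarith
  have hsuby : ∀ z, H y₁ + (inner ℝ (-gy) (z - y₁) : ℝ) ≤ H z := by
    refine subgrad_of_min
      (fun z => (inner ℝ (-(A x₁)) z : ℝ) + 1/ηy * breg s s' y₀ z) H gy y₁ hdy
      hHconv (fun z => ?_)
    have := hymin z
    simp only [inner_neg_left]
    linarith
  have hFx := hFrel x₁ xstar (-gx) hsubx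
  have hHy := hHrel y₁ ystar (-gy) hsuby
  have hgxval : (inner ℝ (-gx) (xstar - x₁) : ℝ)
      = -(inner ℝ y₁ (A xstar) : ℝ) + (inner ℝ y₁ (A x₁) : ℝ)
        - 1/ηx * breg r r' x₀ xstar + 1/ηx * breg r r' x₁ xstar
        + 1/ηx * breg r r' x₀ x₁ := by
    have h3 := breg_three_point r r' x₀ x₁ xstar
    have hadj : (inner ℝ ((ContinuousLinearMap.adjoint A) y₁) (xstar - x₁) : ℝ)
        = (inner ℝ y₁ (A xstar) : ℝ) - (inner ℝ y₁ (A x₁) : ℝ) := by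
      rw [ContinuousLinearMap.adjoint_inner_left]
      simp [inner_sub_right]
    rw [hgx]
    simp only [inner_neg_left, inner_add_left, real_inner_smul_left]
    rw [hadj, h3]; ring
  have hgyval : (inner ℝ (-gy) (ystar - y₁) : ℝ)
      = (inner ℝ (A x₁) ystar : ℝ) - (inner ℝ (A x₁) y₁ : ℝ)
        - 1/ηy * breg s s' y₀ ystar + 1/ηy * breg s s' y₁ ystar
        + 1/ηy * breg s s' y₀ y₁ := by
    have h3 := breg_three_point s s' y₀ y₁ ystar
    rw [hgy]
    simp only [inner_neg_left, inner_add_left, real_inner_smul_left, neg_add_rev,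
      neg_neg, inner_sub_right]
    have h3' : (inner ℝ (s' y₁ - s' y₀) ystar : ℝ) - (inner ℝ (s' y₁ - s' y₀) y₁ : ℝ)
        = breg s s' y₀ ystar - breg s s' y₁ ystar - breg s s' y₀ y₁ := by
      rw [← inner_sub_right]; exact h3
    linear_combination (-(1/ηy)) * h3'
  rw [hgxval] at hFx
  rw [hgyval] at hHy
  have hB01 : 0 ≤ breg r r' x₀ x₁ := breg_nonneg r r' hrconv hrgrad x₀ x₁
  have hC01 : 0 ≤ breg s s' y₀ y₁ := breg_nonneg s s' hsconv hsgrad y₀ y₁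
  have hmul1 : 0 ≤ 1/ηx * breg r r' x₀ x₁ := mul_nonneg (by positivity) hB01
  have hmul2 : 0 ≤ 1/ηy * breg s s' y₀ y₁ := mul_nonneg (by positivity) hC01
  have hcomm1 : (inner ℝ ystar (A x₁) : ℝ) = (inner ℝ (A x₁) ystar : ℝ) :=
    real_inner_comm _ _
  have hcomm2 : (inner ℝ y₁ (A x₁) : ℝ) = (inner ℝ (A x₁) y₁ : ℝ) :=
    real_inner_comm _ _
  constructor
  · have h1 := (hsaddle x₁ y₁).1
    have h2 := (hsaddle x₁ y₁).2
    linarith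
  · linarith
end

section
/- Let r : E₁ → ℝ and s : E₂ → ℝ be differentiable and 1-strongly convex. Let F : E₁ → ℝ and H : E₂ → ℝ be convex functions admitting a subgradient at every point, with F relatively μx-strongly convex with respect to V^r and H relatively μy-strongly convex with respect to V^s, where μx, μy > 0. Let A : E₁ → E₂ be a bounded linear operator with ‖A‖ > 0, define φ(x,y) := F(x) + ⟨y, A x⟩ − H(y), and let (x*, y*) be a saddle point of φ on E₁ × E₂. Set ηx := √(μy/μx)/(2‖A‖), ηy := √(μx/μy)/(2‖A‖), κ := 2‖A‖/√(μx μy), and θ := κ/(κ+1). Suppose the sequences (x_k)_{k≥0}, (y_k)_{k≥−1} satisfy y_{−1} = y₀ and the primal–dual rule: for every k ≥ 0, with ỹ_{k+1} := y_k + θ (y_k − y_{k−1}), x_{k+1} is a global minimizer of x ↦ ⟨Aᵀ ỹ_{k+1}, x⟩ + (1/ηx) V^r_{x_k}(x) + F(x), and y_{k+1} is a global minimizer of y ↦ −⟨A x_{k+1}, y⟩ + (1/ηy) V^s_{y_k}(y) + H(y). Then for every K ≥ 0: ‖x* − x_K‖²/(2ηx) + ‖y* − y_K‖²/ηy ≤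 2 exp(−K/(1+κ)) · (V^r_{x₀}(x*)/ηx + V^s_{y₀}(y*)/ηy). -/
set_option maxHeartbeats 4000000

open Filter Topology

section Aux
set_option linter.unusedSectionVars false


variable {E : Type*} [NormedAddCommGroup E] [InnerProductSpace ℝ E] [CompleteSpace E]

/-- directional-derivative limit along a ray -/
lemma tendsto_ratio (r : E → ℝ) (g x d : E) (hr : HasGradientAt r g x) :
    Tendsto (fun t : ℝ => (r (x + t • d) - r x) / t) (𝓝[>] (0:ℝ)) (𝓝 (inner ℝ g d : ℝ)) := by
  have hline : HasDerivAt (fun t : ℝ => x + t • d) d 0 := by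
    simpa using ((hasDerivAt_id (0:ℝ)).smul_const d).const_add x
  have hcomp : HasDerivAt (fun t : ℝ => r (x + t • d)) (inner ℝ g d : ℝ) 0 := by
    have h1 := hr.hasFDerivAt
    have h2 : HasFDerivAt r ((InnerProductSpace.toDual ℝ E) g) (x + (0:ℝ) • d) := by
      simpa using h1
    simpa [InnerProductSpace.toDual_apply_apply, Function.comp_def] using h2.comp_hasDerivAt (0:ℝ) hline
  have := hasDerivAt_iff_tendsto_slope.mp hcomp
  have h3 : Tendsto (slope (fun t : ℝ => r (x + t • d)) 0) (𝓝[>] (0:ℝ)) (𝓝 (inner ℝ g d : ℝ)) :=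
    this.mono_left (nhdsWithin_mono 0 (fun t ht => ne_of_gt ht))
  refine h3.congr (fun t => ?_)
  simp [slope_def_field]

/-- first-order condition for a differentiable convex function -/
lemma convex_grad_le (f : E → ℝ) (g x : E) (hf : ConvexOn ℝ Set.univ f)
    (hg : HasGradientAt f g x) (z : E) : f x + (inner ℝ g (z - x) : ℝ) ≤ f z := by
  have key : ∀ t ∈ Set.Ioo (0:ℝ) 1, (f (x + t • (z - x)) - f x) / t ≤ f z - f x := by
    intro t ht
    have hcvx := hf.2 (Set.mem_univ x) (Set.mem_univ z) (by linarith [ht.2] : (0:ℝ) ≤ 1 - t)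
      (le_of_lt ht.1) (by ring)
    have hpt : (1 - t) • x + t • z = x + t • (z - x) := by
      rw [smul_sub]; module
    rw [hpt, smul_eq_mul, smul_eq_mul] at hcvx
    rw [div_le_iff₀ ht.1]
    nlinarith [hcvx]
  have hlim := tendsto_ratio f g x (z - x) hg
  have hev : ∀ᶠ t in 𝓝[>] (0:ℝ), (f (x + t • (z - x)) - f x) / t ≤ f z - f x := by
    filter_upwards [Ioo_mem_nhdsGT_of_mem (by constructor <;> norm_num : (0:ℝ) ∈ Set.Ico (0:ℝ) 1)] using key
  have := le_of_tendsto hlim hev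
  linarith

/-- a function with subgradients everywhere is convex -/
lemma subgrad_convex (f : E → ℝ) (h : ∀ x, ∃ g : E, ∀ z, f x + (inner ℝ g (z - x) : ℝ) ≤ f z) :
    ConvexOn ℝ Set.univ f := by
  refine ⟨convex_univ, fun u _ v _ a b ha hb hab => ?_⟩
  obtain ⟨g, hg⟩ := h (a • u + b • v)
  have h1 := hg u
  have h2 := hg v
  have e1 : a • (u - (a • u + b • v)) + b • (v - (a • u + b • v)) = 0 := by
    have : a + b = 1 := hab
    rw [smul_sub, smul_sub]
    rw [show (a:ℝ) = 1 - b by linarith]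
    module
  have e2 : a * (inner ℝ g (u - (a • u + b • v)) : ℝ) + b * (inner ℝ g (v - (a • u + b • v)) : ℝ) = 0 := by
    rw [← real_inner_smul_right, ← real_inner_smul_right, ← inner_add_right, e1, inner_zero_right]
  simp only [smul_eq_mul]
  have e3 : (a + b) * f (a • u + b • v) = f (a • u + b • v) := by rw [hab, one_mul]
  nlinarith [mul_le_mul_of_nonneg_left h1 ha, mul_le_mul_of_nonneg_left h2 hb]

/-- three-point property: global minimizer of a relatively strongly convex function -/
lemma min_rel (r : E → ℝ) (r' : E → E) (hr : ∀ x, HasGradientAt r (r' x) x)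
    (ψ : E → ℝ) (m : ℝ) (hm : 0 ≤ m)
    (hconv : ConvexOn ℝ Set.univ (fun z => ψ z - m * r z))
    (xp : E) (hmin : ∀ z, ψ xp ≤ ψ z) (z : E) :
    ψ xp + m * breg r r' xp z ≤ ψ z := by
  have key : ∀ t ∈ Set.Ioo (0:ℝ) 1,
      m * (r z - r xp - (r (xp + t • (z - xp)) - r xp) / t) ≤ ψ z - ψ xp := by
    intro t ht
    have hcvx := hconv.2 (Set.mem_univ xp) (Set.mem_univ z) (by linarith [ht.2] : (0:ℝ) ≤ 1 - t)
      (le_of_lt ht.1) (by ring)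
    have hpt : (1 - t) • xp + t • z = xp + t • (z - xp) := by rw [smul_sub]; module
    simp only [hpt, smul_eq_mul] at hcvx
    have h0 := hmin (xp + t • (z - xp))
    rw [← sub_nonneg]
    have ht0 := ht.1
    have hdiv : (r (xp + t • (z - xp)) - r xp) / t * t = r (xp + t • (z - xp)) - r xp := by
      field_simp
    nlinarith [mul_pos ht0 (by nlinarith [hcvx, h0] : (0:ℝ) < 1)]
  have hlim := tendsto_ratio r (r' xp) xp (z - xp) (hr xp)
  have hlim2 : Tendsto (fun t : ℝ => m * (r z - r xp - (r (xp + t • (z - xp)) - r xp) / t))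
      (𝓝[>] (0:ℝ)) (𝓝 (m * (r z - r xp - (inner ℝ (r' xp) (z - xp) : ℝ)))) := by
    exact (tendsto_const_nhds.sub hlim).const_mul m
  have hev : ∀ᶠ t in 𝓝[>] (0:ℝ),
      m * (r z - r xp - (r (xp + t • (z - xp)) - r xp) / t) ≤ ψ z - ψ xp := by
    filter_upwards [Ioo_mem_nhdsGT_of_mem (by constructor <;> norm_num : (0:ℝ) ∈ Set.Ico (0:ℝ) 1)] using key
  have hfin := le_of_tendsto hlim2 hev
  simp only [breg]
  linarith

lemma gradient_half_norm_sq (x : E) :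
    HasGradientAt (fun z : E => 1 / 2 * ‖z‖ ^ 2) x x := by
  rw [hasGradientAt_iff_hasFDerivAt]
  have h1 : HasFDerivAt (fun z : E => ‖z‖ ^ 2) (2 • (innerSL ℝ x)) x :=
    (hasStrictFDerivAt_norm_sq x).hasFDerivAt
  have h2 := h1.const_mul (1/2 : ℝ)
  refine h2.congr_fderiv ?_
  ext v
  simp [InnerProductSpace.toDual_apply_apply, two_smul]
  ring

lemma breg_lower (r : E → ℝ) (r' : E → E) (hr : ∀ x, HasGradientAt r (r' x) x)
    (hsc : ConvexOn ℝ Set.univ (fun x => r x - 1 / 2 * ‖x‖ ^ 2)) (u v : E) :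
    1 / 2 * ‖v - u‖ ^ 2 ≤ breg r r' u v := by
  have hg : HasGradientAt (fun z : E => r z - 1 / 2 * ‖z‖ ^ 2) (r' u - u) u := by
    rw [hasGradientAt_iff_hasFDerivAt]
    have h2 := hasGradientAt_iff_hasFDerivAt.mp (gradient_half_norm_sq u)
    have := (hr u).hasFDerivAt.sub h2
    refine this.congr_fderiv ?_
    exact (map_sub (InnerProductSpace.toDual ℝ E) _ _).symm
  have := convex_grad_le _ _ _ hsc hg v
  have hexp : (inner ℝ (r' u - u) (v - u) : ℝ) = (inner ℝ (r' u) (v - u) : ℝ) - (inner ℝ u (v - u) : ℝ) := by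
    rw [inner_sub_left]
  have hn : ‖v - u‖ ^ 2 = ‖v‖ ^ 2 - 2 * (inner ℝ u v : ℝ) + ‖u‖ ^ 2 := by
    rw [← real_inner_self_eq_norm_sq, ← real_inner_self_eq_norm_sq, ← real_inner_self_eq_norm_sq,
      inner_sub_sub_self, real_inner_comm v u]; ring
  have hi : (inner ℝ u (v - u) : ℝ) = (inner ℝ u v : ℝ) - ‖u‖ ^ 2 := by
    rw [inner_sub_right, real_inner_self_eq_norm_sq]
  simp only [breg] at *
  linarith

lemma young_div (a b c η : ℝ) (hη : 0 < η) :
    c * a * b ≤ a^2/(2*η) + c^2*η*b^2/2 := by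
  have h2 : 2*η*(c*a*b) ≤ a^2 + η^2*c^2*b^2 := by nlinarith [sq_nonneg (a - η*c*b)]
  have h4 : (2*η*(c*a*b))/(2*η) ≤ (a^2 + η^2*c^2*b^2)/(2*η) := by
    apply div_le_div_of_nonneg_right h2 -- guess
    linarith
  calc c*a*b = (2*η*(c*a*b))/(2*η) := by field_simp
  _ ≤ (a^2 + η^2*c^2*b^2)/(2*η) := h4
  _ = a^2/(2*η) + c^2*η*b^2/2 := by field_simp

end Aux

/-- linear convergence of the primal–dual method (Chambolle–Pock) for the
bilinearly coupled minimax problem min_x max_y F(x) + ⟨y, Ax⟩ − H(y).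
Indexing convention: sequences are over ℕ and `y (k-1)` uses truncated subtraction,
so at k = 0 it equals `y 0`, encoding y₋₁ = y₀. -/
theorem stmt2 {E₁ E₂ : Type*}
    [NormedAddCommGroup E₁] [InnerProductSpace ℝ E₁] [CompleteSpace E₁]
    [NormedAddCommGroup E₂] [InnerProductSpace ℝ E₂] [CompleteSpace E₂]
    (r : E₁ → ℝ) (r' : E₁ → E₁) (s : E₂ → ℝ) (s' : E₂ → E₂)
    (hrgrad : ∀ x, HasGradientAt r (r' x) x)
    (hsgrad : ∀ y, HasGradientAt s (s' y) y)
    (hrsc : ConvexOn ℝ Set.univ (fun x => r x - 1 / 2 * ‖x‖ ^ 2))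
    (hssc : ConvexOn ℝ Set.univ (fun y => s y - 1 / 2 * ‖y‖ ^ 2))
    (F : E₁ → ℝ) (H : E₂ → ℝ) (μx μy : ℝ) (hμx : 0 < μx) (hμy : 0 < μy)
    (hFconv : ConvexOn ℝ Set.univ F) (hHconv : ConvexOn ℝ Set.univ H)
    (hFsub : ∀ x : E₁, ∃ g : E₁, ∀ z, F x + (inner ℝ g (z - x) : ℝ) ≤ F z)
    (hHsub : ∀ y : E₂, ∃ g : E₂, ∀ z, H y + (inner ℝ g (z - y) : ℝ) ≤ H z)
    (hFrel : ∀ x x' : E₁, ∀ g : E₁, (∀ z, F x + (inner ℝ g (z - x) : ℝ) ≤ F z) →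
      F x + (inner ℝ g (x' - x) : ℝ) + μx * breg r r' x x' ≤ F x')
    (hHrel : ∀ y y' : E₂, ∀ g : E₂, (∀ z, H y + (inner ℝ g (z - y) : ℝ) ≤ H z) →
      H y + (inner ℝ g (y' - y) : ℝ) + μy * breg s s' y y' ≤ H y')
    (A : E₁ →L[ℝ] E₂) (hA : 0 < ‖A‖) (xstar : E₁) (ystar : E₂)
    (hsaddle : ∀ (x : E₁) (y : E₂),
      F xstar + (inner ℝ y (A xstar) : ℝ) - H y
          ≤ F xstar + (inner ℝ ystar (A xstar) : ℝ) - H ystar ∧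
      F xstar + (inner ℝ ystar (A xstar) : ℝ) - H ystar
          ≤ F x + (inner ℝ ystar (A x) : ℝ) - H ystar)
    -- parameter choices
    (ηx ηy κ θ : ℝ)
    (hηx : ηx = Real.sqrt (μy / μx) / (2 * ‖A‖))
    (hηy : ηy = Real.sqrt (μx / μy) / (2 * ‖A‖))
    (hκ : κ = 2 * ‖A‖ / Real.sqrt (μx * μy))
    (hθ : θ = κ / (κ + 1))
    -- primal–dual iterates (y₋₁ = y₀ is encoded by truncated subtraction at k = 0)
    (x : ℕ → E₁) (y : ℕ → E₂)
    (hxmin : ∀ k : ℕ, ∀ z : E₁,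
      (inner ℝ ((ContinuousLinearMap.adjoint A) (y k + θ • (y k - y (k - 1)))) (x (k + 1)) : ℝ)
          + 1 / ηx * breg r r' (x k) (x (k + 1)) + F (x (k + 1))
        ≤ (inner ℝ ((ContinuousLinearMap.adjoint A) (y k + θ • (y k - y (k - 1)))) z : ℝ)
          + 1 / ηx * breg r r' (x k) z + F z)
    (hymin : ∀ k : ℕ, ∀ w : E₂,
      -(inner ℝ (A (x (k + 1))) (y (k + 1)) : ℝ)
          + 1 / ηy * breg s s' (y k) (y (k + 1)) + H (y (k + 1))
        ≤ -(inner ℝ (A (x (k + 1))) w : ℝ)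
          + 1 / ηy * breg s s' (y k) w + H w) :
    ∀ K : ℕ,
      ‖xstar - x K‖ ^ 2 / (2 * ηx) + ‖ystar - y K‖ ^ 2 / ηy
        ≤ 2 * Real.exp (-(K : ℝ) / (1 + κ))
          * (breg r r' (x 0) xstar / ηx + breg s s' (y 0) ystar / ηy) := by
  -- positivity facts
  have hsqpos : 0 < Real.sqrt (μx * μy) := Real.sqrt_pos.mpr (mul_pos hμx hμy)
  have hκpos : 0 < κ := by rw [hκ]; exact div_pos (by linarith) hsqpos
  have hηxpos : 0 < ηx := by
    rw [hηx]; exact div_pos (Real.sqrt_pos.mpr (div_pos hμy hμx)) (by linarith)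
  have hηypos : 0 < ηy := by
    rw [hηy]; exact div_pos (Real.sqrt_pos.mpr (div_pos hμx hμy)) (by linarith)
  have hθpos : 0 < θ := by rw [hθ]; exact div_pos hκpos (by linarith)
  have hθlt1 : θ < 1 := by rw [hθ, div_lt_one (by linarith)]; linarith
  -- scalar identities
  have hp : 0 < Real.sqrt μx := Real.sqrt_pos.mpr hμx
  have hq : 0 < Real.sqrt μy := Real.sqrt_pos.mpr hμy
  have hp2 : Real.sqrt μx ^ 2 = μx := Real.sq_sqrt hμx.le
  have hq2 : Real.sqrt μy ^ 2 = μy := Real.sq_sqrt hμy.le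
  have hpq : Real.sqrt (μx * μy) = Real.sqrt μx * Real.sqrt μy := Real.sqrt_mul hμx.le μy
  have hqp : Real.sqrt (μy / μx) = Real.sqrt μy / Real.sqrt μx := Real.sqrt_div hμy.le μx
  have hpq' : Real.sqrt (μx / μy) = Real.sqrt μx / Real.sqrt μy := Real.sqrt_div hμx.le μy
  have h1ne : Real.sqrt μx ≠ 0 := ne_of_gt hp
  have h2ne : Real.sqrt μy ≠ 0 := ne_of_gt hq
  have h3ne : ‖A‖ ≠ 0 := ne_of_gt hA
  have h4ne : 2 * ‖A‖ / (Real.sqrt μx * Real.sqrt μy) + 1 ≠ 0 := by positivity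
  have k1 : θ * (1 / ηx + μx) = 1 / ηx := by
    rw [hθ, hκ, hηx, hpq, hqp]
    field_simp
    linear_combination (-Real.sqrt μy) * hp2
  have k2 : θ * (1 / ηy + μy) = 1 / ηy := by
    rw [hθ, hκ, hηy, hpq, hpq']
    field_simp
    linear_combination (-Real.sqrt μx) * hq2
  have k3 : ηx * ηy * ‖A‖ ^ 2 = 1 / 4 := by
    rw [hηx, hηy, hqp, hpq']
    field_simp
    ring
  -- the one-step contraction inequality
  have hstep : ∀ k : ℕ,
      breg r r' (x (k+1)) xstar / ηx + breg s s' (y (k+1)) ystar / ηy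
        - θ * (inner ℝ (y (k+1) - y k) (A (x (k+1)) - A xstar) : ℝ)
        + θ / (2 * ηy) * ‖y (k+1) - y k‖ ^ 2
      ≤ θ * (breg r r' (x k) xstar / ηx + breg s s' (y k) ystar / ηy
        - θ * (inner ℝ (y k - y (k-1)) (A (x k) - A xstar) : ℝ)
        + θ / (2 * ηy) * ‖y k - y (k-1)‖ ^ 2) := by
    intro k
    -- convexity of the x-subproblem objective minus (1/ηx+μx) r
    have hconvx : ConvexOn ℝ Set.univ (fun z =>
        ((inner ℝ ((ContinuousLinearMap.adjoint A) (y k + θ • (y k - y (k - 1)))) z : ℝ)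
          + 1 / ηx * breg r r' (x k) z + F z) - (1 / ηx + μx) * r z) := by
      apply subgrad_convex
      intro w
      obtain ⟨g, hg⟩ := hFsub w
      refine ⟨(ContinuousLinearMap.adjoint A) (y k + θ • (y k - y (k - 1)))
        - (1 / ηx) • r' (x k) + g - μx • r' w, fun z => ?_⟩
      have hrel := hFrel w z g hg
      simp only [breg] at hrel ⊢
      have e0 : (inner ℝ ((ContinuousLinearMap.adjoint A) (y k + θ • (y k - y (k - 1)))
          - (1 / ηx) • r' (x k) + g - μx • r' w) (z - w) : ℝ)
          = (inner ℝ ((ContinuousLinearMap.adjoint A) (y k + θ • (y k - y (k - 1)))) (z - w) : ℝ)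
            - 1 / ηx * (inner ℝ (r' (x k)) (z - w) : ℝ) + (inner ℝ g (z - w) : ℝ)
            - μx * (inner ℝ (r' w) (z - w) : ℝ) := by
        simp only [inner_sub_left, inner_add_left, real_inner_smul_left]
      have e1 : (inner ℝ ((ContinuousLinearMap.adjoint A) (y k + θ • (y k - y (k - 1)))) (z - w) : ℝ)
          = (inner ℝ ((ContinuousLinearMap.adjoint A) (y k + θ • (y k - y (k - 1)))) z : ℝ)
            - (inner ℝ ((ContinuousLinearMap.adjoint A) (y k + θ • (y k - y (k - 1)))) w : ℝ) :=
        inner_sub_right _ _ _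
      have e2 : (inner ℝ (r' (x k)) (z - w) : ℝ)
          = (inner ℝ (r' (x k)) (z - x k) : ℝ) - (inner ℝ (r' (x k)) (w - x k) : ℝ) := by
        rw [← inner_sub_right]; congr 1; abel
      rw [e0, e1, e2]
      linarith [hrel]
    have hconvy : ConvexOn ℝ Set.univ (fun w =>
        (-(inner ℝ (A (x (k+1))) w : ℝ) + 1 / ηy * breg s s' (y k) w + H w)
          - (1 / ηy + μy) * s w) := by
      apply subgrad_convex
      intro v
      obtain ⟨g, hg⟩ := hHsub v
      refine ⟨-(A (x (k+1))) - (1 / ηy) • s' (y k) + g - μy • s' v, fun z => ?_⟩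
      have hrel := hHrel v z g hg
      simp only [breg] at hrel ⊢
      have e0 : (inner ℝ (-(A (x (k+1))) - (1 / ηy) • s' (y k) + g - μy • s' v) (z - v) : ℝ)
          = -(inner ℝ (A (x (k+1))) (z - v) : ℝ)
            - 1 / ηy * (inner ℝ (s' (y k)) (z - v) : ℝ) + (inner ℝ g (z - v) : ℝ)
            - μy * (inner ℝ (s' v) (z - v) : ℝ) := by
        simp only [inner_sub_left, inner_add_left, inner_neg_left, real_inner_smul_left]
      have e1 : (inner ℝ (A (x (k+1))) (z - v) : ℝ)
          = (inner ℝ (A (x (k+1))) z : ℝ) - (inner ℝ (A (x (k+1))) v : ℝ) := inner_sub_right _ _ _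
      have e2 : (inner ℝ (s' (y k)) (z - v) : ℝ)
          = (inner ℝ (s' (y k)) (z - y k) : ℝ) - (inner ℝ (s' (y k)) (v - y k) : ℝ) := by
        rw [← inner_sub_right]; congr 1; abel
      rw [e0, e1, e2]
      linarith [hrel]
    -- three-point inequalities from the two minimization steps
    have h1 : ((inner ℝ ((ContinuousLinearMap.adjoint A) (y k + θ • (y k - y (k - 1)))) (x (k+1)) : ℝ)
          + 1 / ηx * breg r r' (x k) (x (k+1)) + F (x (k+1)))
          + (1 / ηx + μx) * breg r r' (x (k+1)) xstar
        ≤ (inner ℝ ((ContinuousLinearMap.adjoint A) (y k + θ • (y k - y (k - 1)))) xstar : ℝ)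
          + 1 / ηx * breg r r' (x k) xstar + F xstar :=
      min_rel r r' hrgrad
        (fun z => (inner ℝ ((ContinuousLinearMap.adjoint A) (y k + θ • (y k - y (k - 1)))) z : ℝ)
          + 1 / ηx * breg r r' (x k) z + F z)
        (1 / ηx + μx) (by positivity) hconvx (x (k+1)) (hxmin k) xstar
    have h2 : (-(inner ℝ (A (x (k+1))) (y (k+1)) : ℝ)
          + 1 / ηy * breg s s' (y k) (y (k+1)) + H (y (k+1)))
          + (1 / ηy + μy) * breg s s' (y (k+1)) ystar
        ≤ -(inner ℝ (A (x (k+1))) ystar : ℝ)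
          + 1 / ηy * breg s s' (y k) ystar + H ystar :=
      min_rel s s' hsgrad
        (fun w => -(inner ℝ (A (x (k+1))) w : ℝ) + 1 / ηy * breg s s' (y k) w + H w)
        (1 / ηy + μy) (by positivity) hconvy (y (k+1)) (hymin k) ystar
    have h3 : F xstar + (inner ℝ (y (k+1)) (A xstar) : ℝ) - H (y (k+1))
        ≤ F (x (k+1)) + (inner ℝ ystar (A (x (k+1))) : ℝ) - H ystar :=
      le_trans (hsaddle (x (k+1)) (y (k+1))).1 (hsaddle (x (k+1)) (y (k+1))).2
    -- rewrite adjoints and expand inner ℝ products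
    rw [ContinuousLinearMap.adjoint_inner_left, ContinuousLinearMap.adjoint_inner_left] at h1
    have hty1 : (inner ℝ (y k + θ • (y k - y (k - 1))) (A (x (k+1))) : ℝ)
        = (inner ℝ (y k) (A (x (k+1))) : ℝ)
          + θ * ((inner ℝ (y k) (A (x (k+1))) : ℝ) - (inner ℝ (y (k-1)) (A (x (k+1))) : ℝ)) := by
      rw [inner_add_left, real_inner_smul_left, inner_sub_left]
    have hty2 : (inner ℝ (y k + θ • (y k - y (k - 1))) (A xstar) : ℝ)
        = (inner ℝ (y k) (A xstar) : ℝ)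
          + θ * ((inner ℝ (y k) (A xstar) : ℝ) - (inner ℝ (y (k-1)) (A xstar) : ℝ)) := by
      rw [inner_add_left, real_inner_smul_left, inner_sub_left]
    have hc1 : (inner ℝ (A (x (k+1))) (y (k+1)) : ℝ) = (inner ℝ (y (k+1)) (A (x (k+1))) : ℝ) :=
      real_inner_comm _ _
    have hc2 : (inner ℝ (A (x (k+1))) ystar : ℝ) = (inner ℝ ystar (A (x (k+1))) : ℝ) :=
      real_inner_comm _ _
    have eQ1 : (inner ℝ (y (k+1) - y k) (A (x (k+1)) - A xstar) : ℝ)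
        = (inner ℝ (y (k+1)) (A (x (k+1))) : ℝ) - (inner ℝ (y (k+1)) (A xstar) : ℝ)
          - (inner ℝ (y k) (A (x (k+1))) : ℝ) + (inner ℝ (y k) (A xstar) : ℝ) := by
      rw [inner_sub_left, inner_sub_right, inner_sub_right]; ring
    have eQ0 : θ * θ * (inner ℝ (y k - y (k-1)) (A (x k) - A xstar) : ℝ)
        = θ * θ * ((inner ℝ (y k) (A (x k)) : ℝ) - (inner ℝ (y k) (A xstar) : ℝ)
          - (inner ℝ (y (k-1)) (A (x k)) : ℝ) + (inner ℝ (y (k-1)) (A xstar) : ℝ)) := by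
      rw [inner_sub_left, inner_sub_right, inner_sub_right]; ring
    have eR : θ * θ * (inner ℝ (y k - y (k-1)) (A (x (k+1)) - A (x k)) : ℝ)
        = θ * θ * ((inner ℝ (y k) (A (x (k+1))) : ℝ) - (inner ℝ (y k) (A (x k)) : ℝ)
          - (inner ℝ (y (k-1)) (A (x (k+1))) : ℝ) + (inner ℝ (y (k-1)) (A (x k)) : ℝ)) := by
      rw [inner_sub_left, inner_sub_right, inner_sub_right]; ring
    -- Young's inequality for the cross term
    have hRabs : |(inner ℝ (y k - y (k-1)) (A (x (k+1)) - A (x k)) : ℝ)|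
        ≤ ‖y k - y (k-1)‖ * (‖A‖ * ‖x (k+1) - x k‖) := by
      calc |(inner ℝ (y k - y (k-1)) (A (x (k+1)) - A (x k)) : ℝ)|
          ≤ ‖y k - y (k-1)‖ * ‖A (x (k+1)) - A (x k)‖ := abs_real_inner_le_norm _ _
        _ ≤ ‖y k - y (k-1)‖ * (‖A‖ * ‖x (k+1) - x k‖) := by
            apply mul_le_mul_of_nonneg_left _ (norm_nonneg _)
            rw [← map_sub]; exact A.le_opNorm _
    have hyoung : -(θ * (inner ℝ (y k - y (k-1)) (A (x (k+1)) - A (x k)) : ℝ))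
        ≤ ‖x (k+1) - x k‖ ^ 2 / (2 * ηx)
          + (θ * ‖A‖) ^ 2 * ηx * ‖y k - y (k-1)‖ ^ 2 / 2 := by
      have hy := young_div (‖x (k+1) - x k‖) (‖y k - y (k-1)‖) (θ * ‖A‖) ηx hηxpos
      have habs : -(θ * (inner ℝ (y k - y (k-1)) (A (x (k+1)) - A (x k)) : ℝ))
          ≤ (θ * ‖A‖) * ‖x (k+1) - x k‖ * ‖y k - y (k-1)‖ := by
        nlinarith [hRabs, neg_abs_le (inner ℝ (y k - y (k-1)) (A (x (k+1)) - A (x k)) : ℝ),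
          hθpos.le, abs_nonneg (inner ℝ (y k - y (k-1)) (A (x (k+1)) - A (x k)) : ℝ)]
      linarith [hy]
    -- Bregman lower bounds
    have hb1 : 1 / 2 * ‖x (k+1) - x k‖ ^ 2 ≤ breg r r' (x k) (x (k+1)) :=
      breg_lower r r' hrgrad hrsc (x k) (x (k+1))
    have hb2 : 1 / 2 * ‖y (k+1) - y k‖ ^ 2 ≤ breg s s' (y k) (y (k+1)) :=
      breg_lower s s' hsgrad hssc (y k) (y (k+1))
    -- master inequality
    have M : (1 / ηx + μx) * breg r r' (x (k+1)) xstar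
          + (1 / ηy + μy) * breg s s' (y (k+1)) ystar
          + 1 / ηx * breg r r' (x k) (x (k+1)) + 1 / ηy * breg s s' (y k) (y (k+1))
          - (inner ℝ (y (k+1) - y k) (A (x (k+1)) - A xstar) : ℝ)
          + θ * (inner ℝ (y k - y (k-1)) (A (x k) - A xstar) : ℝ)
          + θ * (inner ℝ (y k - y (k-1)) (A (x (k+1)) - A (x k)) : ℝ)
        ≤ 1 / ηx * breg r r' (x k) xstar + 1 / ηy * breg s s' (y k) ystar := by
      have eQ0' : θ * (inner ℝ (y k - y (k-1)) (A (x k) - A xstar) : ℝ)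
          = θ * ((inner ℝ (y k) (A (x k)) : ℝ) - (inner ℝ (y k) (A xstar) : ℝ)
            - (inner ℝ (y (k-1)) (A (x k)) : ℝ) + (inner ℝ (y (k-1)) (A xstar) : ℝ)) := by
        rw [inner_sub_left, inner_sub_right, inner_sub_right]; ring
      have eR' : θ * (inner ℝ (y k - y (k-1)) (A (x (k+1)) - A (x k)) : ℝ)
          = θ * ((inner ℝ (y k) (A (x (k+1))) : ℝ) - (inner ℝ (y k) (A (x k)) : ℝ)
            - (inner ℝ (y (k-1)) (A (x (k+1))) : ℝ) + (inner ℝ (y (k-1)) (A (x k)) : ℝ)) := by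
        rw [inner_sub_left, inner_sub_right, inner_sub_right]; ring
      rw [hty1, hty2] at h1
      rw [hc1, hc2] at h2
      linarith only [h1, h2, h3, eQ1, eQ0', eR']
    -- multiply master inequality by θ and combine
    have Mθ := mul_le_mul_of_nonneg_left M hθpos.le
    have fact1 : θ * ((1 / ηx + μx) * breg r r' (x (k+1)) xstar)
        = breg r r' (x (k+1)) xstar / ηx := by rw [← mul_assoc, k1]; ring
    have fact2 : θ * ((1 / ηy + μy) * breg s s' (y (k+1)) ystar)
        = breg s s' (y (k+1)) ystar / ηy := by rw [← mul_assoc, k2]; ring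
    have hb1θ := mul_le_mul_of_nonneg_left hb1 (by positivity : (0:ℝ) ≤ θ / ηx)
    have hb2θ := mul_le_mul_of_nonneg_left hb2 (by positivity : (0:ℝ) ≤ θ / ηy)
    have hyoungθ := mul_le_mul_of_nonneg_left hyoung hθpos.le
    have hslack : θ * ((θ * ‖A‖) ^ 2 * ηx * ‖y k - y (k-1)‖ ^ 2 / 2)
        ≤ θ * θ * (1 / (2 * ηy)) * ‖y k - y (k-1)‖ ^ 2 := by
      have h5 : θ ^ 3 * (ηx * ηy * ‖A‖ ^ 2) ≤ θ ^ 2 := by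
        rw [k3]; nlinarith only [hθpos, hθlt1]
      have h6 : θ * ((θ * ‖A‖) ^ 2 * ηx / 2) ≤ θ * θ * (1 / (2 * ηy)) := by
        have e : θ * θ * (1 / (2 * ηy)) - θ * ((θ * ‖A‖) ^ 2 * ηx / 2)
            = (θ ^ 2 - θ ^ 3 * (ηx * ηy * ‖A‖ ^ 2)) / (2 * ηy) := by
          field_simp
        have : (0:ℝ) ≤ (θ ^ 2 - θ ^ 3 * (ηx * ηy * ‖A‖ ^ 2)) / (2 * ηy) :=
          div_nonneg (by linarith [h5]) (by positivity)
        linarith [e ▸ this]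
      nlinarith only [mul_le_mul_of_nonneg_right h6 (sq_nonneg ‖y k - y (k-1)‖)]
    ring_nf at Mθ fact1 fact2 hb1θ hb2θ hyoungθ hslack ⊢
    linarith only [Mθ, fact1, fact2, hb1θ, hb2θ, hyoungθ, hslack]
  -- iterate the contraction
  have hΦ0y : y 0 - y (0 - 1) = 0 := by norm_num
  have hiter : ∀ K : ℕ,
      breg r r' (x K) xstar / ηx + breg s s' (y K) ystar / ηy
        - θ * (inner ℝ (y K - y (K-1)) (A (x K) - A xstar) : ℝ)
        + θ / (2 * ηy) * ‖y K - y (K-1)‖ ^ 2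
      ≤ θ ^ K * (breg r r' (x 0) xstar / ηx + breg s s' (y 0) ystar / ηy) := by
    intro K
    induction K with
    | zero =>
        simp only [Nat.zero_sub, hΦ0y, inner_zero_left, norm_zero]
        norm_num
    | succ n ih =>
        have h7 := hstep n
        have h8 := mul_le_mul_of_nonneg_left ih hθpos.le
        simp only [Nat.add_sub_cancel] at *
        calc breg r r' (x (n+1)) xstar / ηx + breg s s' (y (n+1)) ystar / ηy
            - θ * (inner ℝ (y (n+1) - y n) (A (x (n+1)) - A xstar) : ℝ)
            + θ / (2 * ηy) * ‖y (n+1) - y n‖ ^ 2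
            ≤ θ * (breg r r' (x n) xstar / ηx + breg s s' (y n) ystar / ηy
              - θ * (inner ℝ (y n - y (n-1)) (A (x n) - A xstar) : ℝ)
              + θ / (2 * ηy) * ‖y n - y (n-1)‖ ^ 2) := h7
          _ ≤ θ * (θ ^ n * (breg r r' (x 0) xstar / ηx + breg s s' (y 0) ystar / ηy)) := h8
          _ = θ ^ (n+1) * (breg r r' (x 0) xstar / ηx + breg s s' (y 0) ystar / ηy) := by
              rw [pow_succ]; ring
  -- conclusion
  intro K
  have h6 := hiter K
  -- lower bound for Φ K
  have hb1 : 1 / 2 * ‖xstar - x K‖ ^ 2 ≤ breg r r' (x K) xstar :=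
    breg_lower r r' hrgrad hrsc (x K) xstar
  have hb2 : 1 / 2 * ‖ystar - y K‖ ^ 2 ≤ breg s s' (y K) ystar :=
    breg_lower s s' hsgrad hssc (y K) ystar
  have hL2 : ‖A‖ ^ 2 * ηy = 1 / (4 * ηx) := by
    rw [eq_div_iff (by positivity : (4:ℝ) * ηx ≠ 0)]
    linear_combination 4 * k3
  have hQabs : |(inner ℝ (y K - y (K-1)) (A (x K) - A xstar) : ℝ)|
      ≤ ‖y K - y (K-1)‖ * (‖A‖ * ‖xstar - x K‖) := by
    calc |(inner ℝ (y K - y (K-1)) (A (x K) - A xstar) : ℝ)|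
        ≤ ‖y K - y (K-1)‖ * ‖A (x K) - A xstar‖ := abs_real_inner_le_norm _ _
      _ ≤ ‖y K - y (K-1)‖ * (‖A‖ * ‖xstar - x K‖) := by
          apply mul_le_mul_of_nonneg_left _ (norm_nonneg _)
          rw [← map_sub]
          calc ‖A (x K - xstar)‖ ≤ ‖A‖ * ‖x K - xstar‖ := A.le_opNorm _
            _ = ‖A‖ * ‖xstar - x K‖ := by rw [norm_sub_rev]
  have hyoung2 : θ * (inner ℝ (y K - y (K-1)) (A (x K) - A xstar) : ℝ)
      ≤ θ / (2 * ηy) * ‖y K - y (K-1)‖ ^ 2 + θ / (8 * ηx) * ‖xstar - x K‖ ^ 2 := by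
    have hy := young_div (‖y K - y (K-1)‖) (‖xstar - x K‖) (θ * ‖A‖) (ηy / θ)
      (div_pos hηypos hθpos)
    have habs : θ * (inner ℝ (y K - y (K-1)) (A (x K) - A xstar) : ℝ)
        ≤ (θ * ‖A‖) * ‖y K - y (K-1)‖ * ‖xstar - x K‖ := by
      nlinarith [hQabs, le_abs_self (inner ℝ (y K - y (K-1)) (A (x K) - A xstar) : ℝ), hθpos.le]
    have e1 : ‖y K - y (K-1)‖ ^ 2 / (2 * (ηy / θ)) = θ / (2 * ηy) * ‖y K - y (K-1)‖ ^ 2 := by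
      field_simp
    have e2 : (θ * ‖A‖) ^ 2 * (ηy / θ) * ‖xstar - x K‖ ^ 2 / 2
        = θ / (8 * ηx) * ‖xstar - x K‖ ^ 2 := by
      have : (θ * ‖A‖) ^ 2 * (ηy / θ) = θ * (‖A‖ ^ 2 * ηy) := by
        field_simp
      rw [this, hL2]; ring
    rw [e1, e2] at hy
    linarith [hy, habs]
  have hθ8 : θ / (8 * ηx) * ‖xstar - x K‖ ^ 2 ≤ 1 / (8 * ηx) * ‖xstar - x K‖ ^ 2 := by
    apply mul_le_mul_of_nonneg_right _ (sq_nonneg _)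
    exact (div_le_div_iff_of_pos_right (by positivity)).mpr hθlt1.le
  have hC0 : 0 ≤ breg r r' (x 0) xstar / ηx + breg s s' (y 0) ystar / ηy := by
    have b1 := breg_lower r r' hrgrad hrsc (x 0) xstar
    have b2 := breg_lower s s' hsgrad hssc (y 0) ystar
    have : (0:ℝ) ≤ breg r r' (x 0) xstar := le_trans (by positivity) b1
    have : (0:ℝ) ≤ breg s s' (y 0) ystar := le_trans (by positivity) b2
    positivity
  -- exponential bound
  have hexpθ : θ ≤ Real.exp (-(1 / (1 + κ))) := by
    have h9 := Real.add_one_le_exp (-(1 / (1 + κ)))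
    have e : θ = 1 - 1 / (1 + κ) := by
      rw [hθ]
      rw [eq_sub_iff_add_eq, div_add_div _ _ (by linarith : κ + 1 ≠ 0) (by linarith : 1 + κ ≠ 0)]
      rw [div_eq_one_iff_eq (by nlinarith : (κ + 1) * (1 + κ) ≠ 0)]
      ring
    rw [e]; linarith [h9]
  have hexpK : θ ^ K ≤ Real.exp (-(K : ℝ) / (1 + κ)) := by
    calc θ ^ K ≤ (Real.exp (-(1 / (1 + κ)))) ^ K := pow_le_pow_left₀ hθpos.le hexpθ K
      _ = Real.exp ((K : ℝ) * (-(1 / (1 + κ)))) := by rw [← Real.exp_nat_mul]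
      _ = Real.exp (-(K : ℝ) / (1 + κ)) := by congr 1; ring
  -- put everything together
  have hfinal : θ ^ K * (breg r r' (x 0) xstar / ηx + breg s s' (y 0) ystar / ηy)
      ≤ Real.exp (-(K : ℝ) / (1 + κ))
        * (breg r r' (x 0) xstar / ηx + breg s s' (y 0) ystar / ηy) :=
    mul_le_mul_of_nonneg_right hexpK hC0
  have hb1' := mul_le_mul_of_nonneg_left hb1 (by positivity : (0:ℝ) ≤ 1 / ηx)
  have hb2' := mul_le_mul_of_nonneg_left hb2 (by positivity : (0:ℝ) ≤ 1 / ηy)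
  have hxpos : (0:ℝ) ≤ 1 / ηx * ‖xstar - x K‖ ^ 2 := by positivity
  ring_nf at h6 hyoung2 hθ8 hfinal hb1' hb2' hxpos ⊢
  linarith only [h6, hyoung2, hθ8, hfinal, hb1', hb2', hxpos]
end

section
/- Let f : E → ℝ be L-smooth and μ-strongly convex with 0 < μ < L, let x* be the minimizer of f, and set f̲ := f − (μ/2)‖·‖². Set ηx := 1/√(μ(L−μ)), ηu := √(μ/(L−μ)), θ := 1/(1 + √(μ/(L−μ))). Fix x₀ ∈ E and define sequences by x̲_{−1} = x̲₀ = x₀ and, for every k ≥ 0: ∇̃_{k+1} := ∇f̲(x̲_k) + θ (∇f̲(x̲_k) − ∇f̲(x̲_{k−1})); x_{k+1} := (x_k − ηx ∇̃_{k+1})/(1 + ηx μ); x̲_{k+1} := (x̲_k + ηu x_{k+1})/(1 + ηu). Then there exists a constant C > 0, depending only on L and μ, such that for every K ≥ 0: ‖x* − x_K‖² ≤ C · exp(−K/(1 + 2√(L/μ − 1))) · ‖x* − x₀‖². -/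
open Real Set

local notation "⟪" x ", " y "⟫" => @inner ℝ _ _ x y

section Aux
variable {E : Type*} [NormedAddCommGroup E] [InnerProductSpace ℝ E] [CompleteSpace E]

lemma grad_line {φ : E → ℝ} {φ' : E → E} (h : ∀ z, HasGradientAt φ (φ' z) z) (p d : E) (t : ℝ) :
    HasDerivAt (fun s : ℝ => φ (p + s • d)) ⟪φ' (p + t • d), d⟫ t := by
  have hc : HasDerivAt (fun s : ℝ => p + s • d) d t := by
    simpa using ((hasDerivAt_id t).smul_const d).const_add p
  have h2 := (h (p + t • d)).hasFDerivAt.comp_hasDerivAt t hc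
  simpa [InnerProductSpace.toDual_apply_apply, Function.comp_def] using h2

lemma convex_tangent {φ : E → ℝ} {φ' : E → E} (h : ∀ z, HasGradientAt φ (φ' z) z)
    (hconv : ConvexOn ℝ Set.univ φ) (p q : E) :
    φ p + ⟪φ' p, q - p⟫ ≤ φ q := by
  have hψ : ConvexOn ℝ Set.univ fun t : ℝ => φ (p + t • (q - p)) := by
    have h2 := hconv.comp_affineMap (AffineMap.lineMap p q : ℝ →ᵃ[ℝ] E)
    rw [Set.preimage_univ] at h2
    have he : (fun t : ℝ => φ (p + t • (q - p))) = φ ∘ (AffineMap.lineMap p q : ℝ →ᵃ[ℝ] E) := by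
      funext t
      rw [Function.comp_apply, AffineMap.lineMap_apply_module']
      congr 1
      abel
    rw [he]
    exact h2
  have hd := grad_line h p (q - p) 0
  rw [zero_smul, add_zero] at hd
  have hs := hψ.le_slope_of_hasDerivAt (Set.mem_univ (0:ℝ)) (Set.mem_univ (1:ℝ)) one_pos hd
  rw [slope_def_field] at hs
  simp only [one_smul, zero_smul, add_zero, sub_zero, div_one] at hs
  have he1 : p + (q - p) = q := by abel
  rw [he1] at hs
  linarith

lemma mono_tangent {φ : E → ℝ} {φ' : E → E} (h : ∀ z, HasGradientAt φ (φ' z) z)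
    (hm : ∀ z w : E, 0 ≤ ⟪φ' z - φ' w, z - w⟫) (p q : E) :
    φ p + ⟪φ' p, q - p⟫ ≤ φ q := by
  obtain ⟨c, hc, hceq⟩ := exists_hasDerivAt_eq_slope (fun t : ℝ => φ (p + t • (q - p)))
      (fun t => ⟪φ' (p + t • (q - p)), q - p⟫) one_pos
      (fun t _ => ((grad_line h p (q - p) t).continuousAt.continuousWithinAt))
      (fun t _ => grad_line h p (q - p) t)
  simp only [one_smul, zero_smul, add_zero, sub_zero, div_one] at hceq
  have he1 : p + (q - p) = q := by abel
  rw [he1] at hceq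
  have h3 := hm (p + c • (q - p)) p
  have he2 : (p + c • (q - p)) - p = c • (q - p) := by abel
  rw [he2, real_inner_smul_right, inner_sub_left] at h3
  have hc0 : 0 < c := hc.1
  nlinarith [hceq, h3]

lemma grad_sq (c : ℝ) (z : E) :
    HasGradientAt (fun w : E => c * ‖w‖ ^ 2) ((2 * c) • z) z := by
  rw [hasGradientAt_iff_isLittleO]
  have heq : (fun w : E => c * ‖w‖ ^ 2 - c * ‖z‖ ^ 2 - ⟪(2 * c) • z, w - z⟫)
      = fun w => c * ‖w - z‖ ^ 2 := by
    funext w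
    rw [real_inner_smul_left, inner_sub_right, norm_sub_sq_real w z, real_inner_comm z w,
      real_inner_self_eq_norm_sq]
    ring
  rw [heq]
  refine Asymptotics.isLittleO_iff.mpr fun ε hε => ?_
  have hδ : 0 < ε / (|c| + 1) := by positivity
  filter_upwards [Metric.ball_mem_nhds z hδ] with w hw
  rw [Metric.mem_ball, dist_eq_norm] at hw
  have h1 : (0:ℝ) ≤ ‖w - z‖ := norm_nonneg _
  have hc1 : |c| * ‖w - z‖ ≤ ε := by
    have h2 : ‖w - z‖ < ε / (|c| + 1) := hw
    have h3 : (0:ℝ) ≤ |c| := abs_nonneg c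
    rw [lt_div_iff₀ (by positivity)] at h2
    nlinarith
  have h4 : ‖c * ‖w - z‖ ^ 2‖ = |c| * ‖w - z‖ * ‖w - z‖ := by
    rw [Real.norm_eq_abs, abs_mul, abs_of_nonneg (by positivity : (0:ℝ) ≤ ‖w - z‖ ^ 2)]
    ring
  rw [h4]
  nlinarith [hc1, h1]

lemma grad_comb {f : E → ℝ} {f' : E → E} (hf : ∀ z, HasGradientAt f (f' z) z) (μ : ℝ) (z : E) :
    HasGradientAt (fun w => f w - μ / 2 * ‖w‖ ^ 2) (f' z - μ • z) z := by
  rw [hasGradientAt_iff_hasFDerivAt]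
  have hs : f' z - μ • z = f' z - (2 * (μ / 2)) • z := by rw [show (2:ℝ) * (μ / 2) = μ from by ring]
  rw [hs, map_sub]
  exact (hf z).hasFDerivAt.sub (grad_sq (μ/2) z).hasFDerivAt

lemma grad_comb' {f : E → ℝ} {f' : E → E} (hf : ∀ z, HasGradientAt f (f' z) z) (L : ℝ) (z : E) :
    HasGradientAt (fun w => L / 2 * ‖w‖ ^ 2 - f w) (L • z - f' z) z := by
  rw [hasGradientAt_iff_hasFDerivAt]
  have hs : L • z - f' z = (2 * (L / 2)) • z - f' z := by rw [show (2:ℝ) * (L / 2) = L from by ring]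
  rw [hs, map_sub]
  exact (grad_sq (L/2) z).hasFDerivAt.sub (hf z).hasFDerivAt

lemma descent_lemma {f : E → ℝ} {f' : E → E} {L : ℝ} (hf : ∀ z, HasGradientAt f (f' z) z)
    (hL : ∀ z w, ‖f' z - f' w‖ ≤ L * ‖z - w‖) (p q : E) :
    f q ≤ f p + ⟪f' p, q - p⟫ + L / 2 * ‖q - p‖ ^ 2 := by
  have hmono : ∀ z w : E, 0 ≤ ⟪(L • z - f' z) - (L • w - f' w), z - w⟫ := by
    intro z w
    have e : (L • z - f' z) - (L • w - f' w) = L • (z - w) - (f' z - f' w) := by module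
    rw [e, inner_sub_left, real_inner_smul_left, real_inner_self_eq_norm_sq]
    have h1 := real_inner_le_norm (f' z - f' w) (z - w)
    have h2 := hL z w
    nlinarith [norm_nonneg (z - w), norm_nonneg (f' z - f' w)]
  have h3 := mono_tangent (grad_comb' hf L) hmono p q
  have e1 : ⟪L • p - f' p, q - p⟫ = L * ⟪p, q - p⟫ - ⟪f' p, q - p⟫ := by
    rw [inner_sub_left, real_inner_smul_left]
  have e2 : ‖q‖^2 = ‖p‖^2 + 2*⟪p, q - p⟫ + ‖q - p‖^2 := by
    have h := norm_add_sq_real p (q - p)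
    rw [show p + (q - p) = q by abel] at h
    linarith
  rw [e1] at h3
  have e2' : L/2 * ‖q‖^2 = L/2*‖p‖^2 + L*⟪p, q - p⟫ + L/2*‖q - p‖^2 := by
    linear_combination (L/2) * e2
  linarith

lemma coco_lemma {β : ℝ} (hβ : 0 < β) (g : E → ℝ) (G : E → E)
    (hgi : ∀ p q : E, g p + ⟪G p, q - p⟫ ≤ g q)
    (hgd : ∀ p q : E, g q ≤ g p + ⟪G p, q - p⟫ + β / 2 * ‖q - p‖ ^ 2) (p q : E) :
    ‖G p - G q‖ ^ 2 ≤ 2 * β * (g p - g q - ⟪G q, p - q⟫) := by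
  set z := p - (1/β) • (G p - G q) with hz
  have h1 := hgd p z
  have h2 := hgi q z
  have e0 : z - p = -((1/β) • (G p - G q)) := by rw [hz]; abel
  have e1 : ⟪G p, z - p⟫ = -((1/β) * ⟪G p, G p - G q⟫) := by
    rw [e0, inner_neg_right, real_inner_smul_right]
  have e2 : β / 2 * ‖z - p‖ ^ 2 = 1/β * ‖G p - G q‖ ^ 2 / 2 := by
    rw [e0, norm_neg, norm_smul, Real.norm_eq_abs, abs_of_pos (by positivity : (0:ℝ) < 1/β)]
    field_simp
  have e3 : ⟪G q, z - q⟫ = ⟪G q, p - q⟫ - (1/β) * ⟪G q, G p - G q⟫ := by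
    rw [show z - q = (p - q) - (1/β) • (G p - G q) by rw [hz]; abel,
      inner_sub_right, real_inner_smul_right]
  have e4 : (1/β) * ⟪G p, G p - G q⟫ - (1/β) * ⟪G q, G p - G q⟫ = (1/β) * ‖G p - G q‖ ^ 2 := by
    have e : ⟪G p, G p - G q⟫ - ⟪G q, G p - G q⟫ = ‖G p - G q‖ ^ 2 := by
      rw [← inner_sub_left, real_inner_self_eq_norm_sq]
    linear_combination (1/β) * e
  have h5 : 1/β * ‖G p - G q‖ ^ 2 / 2 ≤ g p - g q - ⟪G q, p - q⟫ := by
    rw [e1, e2] at h1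
    rw [e3] at h2
    linarith
  have hcan : 2*β*(1/β * ‖G p - G q‖ ^ 2 / 2) = ‖G p - G q‖ ^ 2 := by
    field_simp
  nlinarith [mul_le_mul_of_nonneg_left h5 (by positivity : (0:ℝ) ≤ 2*β)]

set_option maxHeartbeats 1600000 in
lemma step_ineq {E : Type*} [NormedAddCommGroup E] [InnerProductSpace ℝ E]
    (a b τ : ℝ) (ha : 0 < a) (hb : 0 < b) (hτ : τ * (a + b) = b)
    (g : E → ℝ) (G : E → E) (P : E)
    (hgi : ∀ p q : E, g p + ⟪G p, q - p⟫ ≤ g q)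
    (hco : ∀ p q : E, ‖G p - G q‖ ^ 2 ≤ 2 * b ^ 2 * (g p - g q - ⟪G q, p - q⟫))
    (hGP : G P = (-(a^2)) • P)
    (A Am A' X X' : E)
    (hE1 : (a*b + a^2) • X' = (a*b) • X - ((1+τ) • G A - τ • G Am))
    (hE2 : (b + a) • A' = b • A + a • X') :
    (a*b)^2 * ‖X' - P‖^2 + 2*b^2*(g A' - g P - ⟪G P, A' - P⟫)
      - 2*a*b*τ*⟪G A' - G A, X' - P⟫ + 2*τ*b^2*(g A - g A' - ⟪G A', A - A'⟫)
    ≤ τ * ((a*b)^2 * ‖X - P‖^2 + 2*b^2*(g A - g P - ⟪G P, A - P⟫)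
      - 2*a*b*τ*⟪G A - G Am, X - P⟫ + 2*τ*b^2*(g Am - g A - ⟪G A, Am - A⟫)) := by
  have hab : (0:ℝ) < a + b := by linarith
  have hτv : τ = b / (a + b) := (eq_div_iff (ne_of_gt hab)).mpr hτ
  have hτ0 : 0 < τ := by rw [hτv]; positivity
  have hτ1 : τ ≤ 1 := by rw [hτv, div_le_one hab]; linarith
  -- scalar consequences of the update equations
  have hv : (a*b + a^2) • X' - ((a*b) • X - ((1+τ) • G A - τ • G Am)) = 0 :=
    sub_eq_zero_of_eq hE1
  have hw : (b + a) • A' - (b • A + a • X') = 0 := sub_eq_zero_of_eq hE2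
  have hS1 : ⟪(a*b + a^2) • X' - ((a*b) • X - ((1+τ) • G A - τ • G Am)), X' - P⟫ = 0 := by
    rw [hv, inner_zero_left]
  have hS2 : ⟪G A', (b + a) • A' - (b • A + a • X')⟫ = 0 := by rw [hw, inner_zero_right]
  have hS3 : ⟪P, (b + a) • A' - (b • A + a • X')⟫ = 0 := by rw [hw, inner_zero_right]
  -- the master identity
  have hM : (a+b) * (g A' - g P - ⟪G P, A' - P⟫) - b * (g A - g P - ⟪G P, A - P⟫)
      + b * (g A - g A' - ⟪G A', A - A'⟫) + a * (g P - g A' - ⟪G A', P - A'⟫)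
      - a * ⟪G A' - G A, X' - P⟫ + a*τ*⟪G A - G Am, X - P⟫ + a*τ*⟪G A - G Am, X' - X⟫
      + (a^3 + a^2*b/2) * ‖X' - P‖^2 + (a^2*b/2) * ‖X' - X‖^2
      = (a^2*b/2) * ‖X - P‖^2 := by
    simp only [hGP] at *
    simp only [← real_inner_self_eq_norm_sq, inner_sub_left, inner_sub_right, inner_add_left,
      inner_add_right, real_inner_smul_left, real_inner_smul_right, inner_neg_left,
      inner_neg_right] at hS1 hS2 hS3 ⊢
    simp only [real_inner_comm X X', real_inner_comm P X', real_inner_comm P X,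
      real_inner_comm A' X', real_inner_comm A' X, real_inner_comm A' P,
      real_inner_comm A X', real_inner_comm A X, real_inner_comm A P, real_inner_comm A A',
      real_inner_comm Am X', real_inner_comm Am X, real_inner_comm Am P, real_inner_comm Am A',
      real_inner_comm Am A,
      real_inner_comm (G A') X', real_inner_comm (G A') X, real_inner_comm (G A') P,
      real_inner_comm (G A') A', real_inner_comm (G A') A, real_inner_comm (G A') Am,
      real_inner_comm (G A) X', real_inner_comm (G A) X, real_inner_comm (G A) P,
      real_inner_comm (G A) A', real_inner_comm (G A) A, real_inner_comm (G A) Am,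
      real_inner_comm (G A) (G A'),
      real_inner_comm (G Am) X', real_inner_comm (G Am) X, real_inner_comm (G Am) P,
      real_inner_comm (G Am) A', real_inner_comm (G Am) A, real_inner_comm (G Am) Am,
      real_inner_comm (G Am) (G A'), real_inner_comm (G Am) (G A)] at hS1 hS2 hS3 ⊢
    linear_combination a * hS1 + hS2 + a^2 * hS3
  -- opaque-level combination
  have keyEq : ((a*b)^2 * ‖X' - P‖^2 + 2*b^2*(g A' - g P - ⟪G P, A' - P⟫)
      - 2*a*b*τ*⟪G A' - G A, X' - P⟫ + 2*τ*b^2*(g A - g A' - ⟪G A', A - A'⟫))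
      - τ * ((a*b)^2 * ‖X - P‖^2 + 2*b^2*(g A - g P - ⟪G P, A - P⟫)
      - 2*a*b*τ*⟪G A - G Am, X - P⟫ + 2*τ*b^2*(g Am - g A - ⟪G A, Am - A⟫))
      = -(2*a*b*τ*(g P - g A' - ⟪G A', P - A'⟫) + 2*a*b*τ^2*⟪G A - G Am, X' - X⟫
        + τ*a^3*b*‖X' - P‖^2 + τ*a^2*b^2*‖X' - X‖^2
        + 2*τ^2*b^2*(g Am - g A - ⟪G A, Am - A⟫)) := by
    linear_combination (2*b*τ) * hM
      - (2*b*(g A' - g P - ⟪G P, A' - P⟫) + a^2*b*‖X' - P‖^2) * hτ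
  have hBs : 0 ≤ g P - g A' - ⟪G A', P - A'⟫ := by have := hgi A' P; linarith
  have hBm : 0 ≤ g Am - g A - ⟪G A, Am - A⟫ := by have := hgi A Am; linarith
  have hDu : ‖G A - G Am‖^2 ≤ 2*b^2*(g Am - g A - ⟪G A, Am - A⟫) := by
    have := hco Am A
    rwa [show ‖G Am - G A‖ = ‖G A - G Am‖ from norm_sub_rev _ _] at this
  have hYoung : 0 ≤ τ^3*‖G A - G Am‖^2 + 2*a*b*τ^2*⟪G A - G Am, X' - X⟫
      + τ*a^2*b^2*‖X' - X‖^2 := by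
    have h0 : 0 ≤ τ * ‖τ • (G A - G Am) + (a*b) • (X' - X)‖^2 := by positivity
    have e1 : ‖τ • (G A - G Am) + (a*b) • (X' - X)‖^2
        = τ^2*‖G A - G Am‖^2 + 2*(τ*(a*b))*⟪G A - G Am, X' - X⟫ + (a*b)^2*‖X' - X‖^2 := by
      rw [norm_add_sq_real, real_inner_smul_left, real_inner_smul_right, norm_smul, norm_smul,
        Real.norm_eq_abs, Real.norm_eq_abs, abs_of_pos hτ0,
        abs_of_pos (by positivity : (0:ℝ) < a*b)]
      ring
    rw [e1] at h0
    nlinarith [h0]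
  have m1 : 0 ≤ 2*a*b*τ*(g P - g A' - ⟪G A', P - A'⟫) := by
    apply mul_nonneg (by positivity) hBs
  have m2 : 0 ≤ τ*a^3*b*‖X' - P‖^2 := by positivity
  have m3 : τ^3*‖G A - G Am‖^2 ≤ τ^3*(2*b^2*(g Am - g A - ⟪G A, Am - A⟫)) :=
    mul_le_mul_of_nonneg_left hDu (by positivity)
  have m4 : τ^3*(2*b^2*(g Am - g A - ⟪G A, Am - A⟫))
      ≤ τ^2*(2*b^2*(g Am - g A - ⟪G A, Am - A⟫)) := by
    apply mul_le_mul_of_nonneg_right (pow_le_pow_of_le_one hτ0.le hτ1 (by norm_num))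
    exact mul_nonneg (by positivity) hBm
  linarith [keyEq, hYoung, m1, m2, m3, m4]

end Aux


set_option maxHeartbeats 2000000 in
/-- accelerated linear convergence of the primal–dual (AGD-like) update
for minimizing an L-smooth, μ-strongly convex f; the constant C depends only on L and μ
(and the ambient space). Sequences are over ℕ; `xl (k-1)` uses truncated subtraction at
k = 0, encoding x̲₋₁ = x̲₀ = x₀. -/
theorem stmt3 {E : Type*} [NormedAddCommGroup E] [InnerProductSpace ℝ E] [CompleteSpace E]
    (L μ : ℝ) (hμ : 0 < μ) (hμL : μ < L) :
    ∃ C : ℝ, 0 < C ∧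
      ∀ (f : E → ℝ) (f' : E → E),
        (∀ x, HasGradientAt f (f' x) x) →
        (∀ x y, ‖f' x - f' y‖ ≤ L * ‖x - y‖) →
        ConvexOn ℝ Set.univ (fun x => f x - μ / 2 * ‖x‖ ^ 2) →
        ∀ (xstar : E), (∀ z, f xstar ≤ f z) →
        ∀ (ηx ηu θ : ℝ),
          ηx = 1 / Real.sqrt (μ * (L - μ)) →
          ηu = Real.sqrt (μ / (L - μ)) →
          θ = 1 / (1 + Real.sqrt (μ / (L - μ))) →
        ∀ (x₀ : E) (x xl : ℕ → E),
          x 0 = x₀ → xl 0 = x₀ →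
          (∀ k : ℕ, x (k + 1) = (1 + ηx * μ)⁻¹ •
            (x k - ηx • ((f' (xl k) - μ • xl k)
              + θ • ((f' (xl k) - μ • xl k) - (f' (xl (k - 1)) - μ • xl (k - 1)))))) →
          (∀ k : ℕ, xl (k + 1) = (1 + ηu)⁻¹ • (xl k + ηu • x (k + 1))) →
        ∀ K : ℕ,
          ‖xstar - x K‖ ^ 2
            ≤ C * Real.exp (-(K : ℝ) / (1 + 2 * Real.sqrt (L / μ - 1)))
              * ‖xstar - x₀‖ ^ 2 := by
  have hβ : (0:ℝ) < L - μ := by linarith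
  set a := Real.sqrt μ with haq
  set b := Real.sqrt (L - μ) with hbq
  have ha : 0 < a := Real.sqrt_pos.mpr hμ
  have hb : 0 < b := Real.sqrt_pos.mpr hβ
  have ha2 : a ^ 2 = μ := Real.sq_sqrt hμ.le
  have hb2 : b ^ 2 = L - μ := Real.sq_sqrt hβ.le
  refine ⟨(a^2 + b^2) * (a + b) / a^3, by positivity, ?_⟩
  intro f f' hgrad hLip hconv xstar hmin ηx ηu θ hηx hηu hθ x₀ x xl hx0 hxl0 hxrec hxlrec K
  obtain ⟨g, hgdef⟩ : ∃ gg : E → ℝ, gg = fun z => f z - μ / 2 * ‖z‖ ^ 2 := ⟨_, rfl⟩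
  obtain ⟨G, hGdef⟩ : ∃ GG : E → E, GG = fun z => f' z - μ • z := ⟨_, rfl⟩
  have hconv' : ConvexOn ℝ Set.univ g := by rw [hgdef]; exact hconv
  have hGg : ∀ z, HasGradientAt g (G z) z := by
    intro z
    rw [hgdef, hGdef]
    exact grad_comb hgrad μ z
  have hgi : ∀ p q : E, g p + ⟪G p, q - p⟫ ≤ g q := convex_tangent hGg hconv'
  have hgd : ∀ p q : E, g q ≤ g p + ⟪G p, q - p⟫ + (L - μ) / 2 * ‖q - p‖ ^ 2 := by
    intro p q
    have hd := descent_lemma hgrad hLip p q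
    have eA : ⟪G p, q - p⟫ = ⟪f' p, q - p⟫ - μ * ⟪p, q - p⟫ := by
      rw [hGdef]
      simp only [inner_sub_left, real_inner_smul_left]
    have e2 : μ/2 * ‖q‖^2 = μ/2*‖p‖^2 + μ*⟪p, q - p⟫ + μ/2*‖q - p‖^2 := by
      have h := norm_add_sq_real p (q - p)
      rw [show p + (q - p) = q by abel] at h
      linear_combination (μ/2) * h
    rw [hgdef]
    simp only []
    rw [eA]
    linarith
  have hco2 : ∀ p q : E, ‖G p - G q‖ ^ 2 ≤ 2 * b ^ 2 * (g p - g q - ⟪G q, p - q⟫) := by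
    intro p q
    rw [hb2]
    exact coco_lemma hβ g G hgi hgd p q
  have hfstar : f' xstar = 0 := by
    have hloc : IsLocalMin f xstar := Filter.Eventually.of_forall hmin
    have hF := hloc.hasFDerivAt_eq_zero (hgrad xstar).hasFDerivAt
    have := congrArg (InnerProductSpace.toDual ℝ E).symm hF
    simpa using this
  have hGP : G xstar = (-(a^2)) • xstar := by
    rw [hGdef]
    simp only []
    rw [hfstar, ha2, zero_sub, neg_smul]
  have hηx' : ηx = 1/(a*b) := by rw [hηx, Real.sqrt_mul hμ.le]
  have hηu' : ηu = a/b := by rw [hηu, Real.sqrt_div hμ.le]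
  have hθv0 : θ = b / (a + b) := by
    have h1s : Real.sqrt (μ / (L - μ)) = a/b := by rw [Real.sqrt_div hμ.le]
    have h2s : (1:ℝ) + a/b = (b+a)/b := by rw [add_div, div_self hb.ne']
    rw [hθ, h1s, h2s, one_div_div, add_comm b a]
  have hab : (0:ℝ) < a + b := by linarith
  have hθab : θ * (a + b) = b := by
    rw [hθv0]
    exact div_mul_cancel₀ b hab.ne'
  have hθv : θ = b / (a + b) := hθv0
  have hθ0 : 0 < θ := by rw [hθv]; positivity
  have hθ1 : θ ≤ 1 := by rw [hθv, div_le_one hab]; linarith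
  have hE1k : ∀ k : ℕ, (a*b + a^2) • x (k+1) = (a*b) • x k
      - ((1+θ) • G (xl k) - θ • G (xl (k-1))) := by
    intro k
    have hc : (0:ℝ) < 1 + ηx * μ := by rw [hηx']; positivity
    have h1 : (1 + ηx*μ) • x (k+1) = x k - ηx • (G (xl k) + θ • (G (xl k) - G (xl (k-1)))) := by
      rw [hxrec k, smul_inv_smul₀ (ne_of_gt hc)]
      simp only [hGdef]
    have h2 := congrArg (fun v : E => (a*b) • v) h1
    simp only [smul_smul] at h2
    have e1 : a*b*(1+ηx*μ) = a*b + a^2 := by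
      rw [hηx', ← ha2]
      field_simp
      try ring
    have e2 : a*b*ηx = 1 := by
      rw [hηx']
      field_simp
    rw [e1] at h2
    rw [h2, smul_sub, smul_smul, e2, one_smul]
    module
  have hE2k : ∀ k : ℕ, (b + a) • xl (k+1) = b • xl k + a • x (k+1) := by
    intro k
    have hc : (0:ℝ) < 1 + ηu := by rw [hηu']; positivity
    have h1 : (1 + ηu) • xl (k+1) = xl k + ηu • x (k+1) := by
      rw [hxlrec k, smul_inv_smul₀ (ne_of_gt hc)]
    have h2 := congrArg (fun v : E => b • v) h1
    simp only [smul_smul] at h2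
    have e1 : b*(1+ηu) = b + a := by
      rw [hηu']
      field_simp
    have e2 : b*ηu = a := by
      rw [hηu']
      field_simp
    rw [e1] at h2
    rw [h2, smul_add, smul_smul, e2]
  set W : ℕ → ℝ := fun k => (a*b)^2 * ‖x k - xstar‖^2
      + 2*b^2*(g (xl k) - g xstar - ⟪G xstar, xl k - xstar⟫)
      - 2*a*b*θ*⟪G (xl k) - G (xl (k-1)), x k - xstar⟫
      + 2*θ*b^2*(g (xl (k-1)) - g (xl k) - ⟪G (xl k), xl (k-1) - xl k⟫) with hWdef
  have hstep : ∀ k : ℕ, W (k+1) ≤ θ * W k := by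
    intro k
    have h := step_ineq a b θ ha hb hθab g G xstar hgi hco2 hGP
      (xl k) (xl (k-1)) (xl (k+1)) (x k) (x (k+1)) (hE1k k) (hE2k k)
    simp only [hWdef, Nat.add_sub_cancel]
    exact h
  have hWK : ∀ K : ℕ, W K ≤ θ^K * W 0 := by
    intro K
    induction K with
    | zero => simp
    | succ n ih =>
      calc W (n+1) ≤ θ * W n := hstep n
        _ ≤ θ * (θ^n * W 0) := mul_le_mul_of_nonneg_left ih hθ0.le
        _ = θ^(n+1) * W 0 := by ring
  have hlow : a^2*b^2*(1-θ) * ‖x K - xstar‖^2 ≤ W K := by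
    simp only [hWdef]
    have hΔ : 0 ≤ g (xl K) - g xstar - ⟪G xstar, xl K - xstar⟫ := by
      have := hgi xstar (xl K); linarith
    have hB : 0 ≤ g (xl (K-1)) - g (xl K) - ⟪G (xl K), xl (K-1) - xl K⟫ := by
      have := hgi (xl K) (xl (K-1)); linarith
    have hDu : ‖G (xl K) - G (xl (K-1))‖^2
        ≤ 2*b^2*(g (xl (K-1)) - g (xl K) - ⟪G (xl K), xl (K-1) - xl K⟫) := by
      have := hco2 (xl (K-1)) (xl K)
      rwa [show ‖G (xl (K-1)) - G (xl K)‖ = ‖G (xl K) - G (xl (K-1))‖ from norm_sub_rev _ _]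
        at this
    have hY : 0 ≤ θ * ‖(G (xl K) - G (xl (K-1))) - (a*b) • (x K - xstar)‖^2 := by positivity
    have hYe : ‖(G (xl K) - G (xl (K-1))) - (a*b) • (x K - xstar)‖^2
        = ‖G (xl K) - G (xl (K-1))‖^2 - 2*(a*b)*⟪G (xl K) - G (xl (K-1)), x K - xstar⟫
          + (a*b)^2*‖x K - xstar‖^2 := by
      rw [norm_sub_sq_real, real_inner_smul_right, norm_smul, Real.norm_eq_abs,
        abs_of_pos (by positivity : (0:ℝ) < a*b)]
      ring
    rw [hYe] at hY
    have hDuθ := mul_le_mul_of_nonneg_left hDu hθ0.le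
    have hΔ' : 0 ≤ 2*b^2*(g (xl K) - g xstar - ⟪G xstar, xl K - xstar⟫) :=
      mul_nonneg (by positivity) hΔ
    nlinarith [hY, hDuθ, hΔ']
  have hW0 : W 0 ≤ b^2*(a^2+b^2) * ‖x₀ - xstar‖^2 := by
    simp only [hWdef, Nat.zero_sub, sub_self, inner_zero_left, inner_zero_right]
    have hΔ0 : g (xl 0) - g xstar - ⟪G xstar, xl 0 - xstar⟫ ≤ (L-μ)/2 * ‖xl 0 - xstar‖^2 := by
      have := hgd xstar (xl 0); linarith
    rw [hx0, hxl0]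
    rw [hxl0] at hΔ0
    have h2 := mul_le_mul_of_nonneg_left hΔ0 (by positivity : (0:ℝ) ≤ 2*b^2)
    rw [← hb2] at h2
    nlinarith [h2, sq_nonneg (a*b), norm_nonneg (x₀ - xstar)]
  have hθexp : θ ≤ Real.exp (-(a/(a+2*b))) := by
    have h2 := Real.add_one_le_exp (-(a/(a+2*b)))
    have h3 : θ ≤ 1 - a/(a+2*b) := by
      have e : 1 - a/(a+2*b) = 2*b/(a+2*b) := by
        field_simp
        ring
      rw [hθv, e, div_le_div_iff₀ hab (by positivity)]
      nlinarith
    linarith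
  have hsq2 : Real.sqrt (L/μ - 1) = b/a := by
    have e : L/μ - 1 = (L-μ)/μ := by
      field_simp
    rw [e, Real.sqrt_div hβ.le]
  have hrexp : Real.exp (-(K:ℝ) / (1 + 2 * Real.sqrt (L/μ - 1)))
      = Real.exp (-(a/(a+2*b)))^K := by
    rw [← Real.exp_nat_mul]
    congr 1
    rw [hsq2]
    field_simp
    try ring
  have hpow : θ^K ≤ Real.exp (-(K:ℝ) / (1 + 2 * Real.sqrt (L/μ - 1))) := by
    rw [hrexp]
    exact pow_le_pow_left₀ hθ0.le hθexp K
  rw [norm_sub_rev xstar (x K), norm_sub_rev xstar x₀]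
  have hθlt1 : θ < 1 := by
    rw [hθv, div_lt_one hab]; linarith
  have h1θ : 0 < 1 - θ := by linarith
  have hc0 : (0:ℝ) < a^2*b^2*(1-θ) := by positivity
  rw [← mul_le_mul_iff_right₀ hc0]
  have hc0C : a^2*b^2*(1-θ) * ((a^2 + b^2) * (a + b) / a^3) = b^2*(a^2+b^2) := by
    have e : 1 - θ = a/(a+b) := by
      rw [hθv]
      field_simp
      ring
    rw [e]
    field_simp
  have hchain : a^2*b^2*(1-θ) * ‖x K - xstar‖^2
      ≤ b^2*(a^2+b^2) * (Real.exp (-(K:ℝ) / (1 + 2 * Real.sqrt (L/μ - 1))) * ‖x₀ - xstar‖^2) := by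
    calc a^2*b^2*(1-θ) * ‖x K - xstar‖^2 ≤ W K := hlow
      _ ≤ θ^K * W 0 := hWK K
      _ ≤ θ^K * (b^2*(a^2+b^2) * ‖x₀ - xstar‖^2) :=
          mul_le_mul_of_nonneg_left hW0 (pow_nonneg hθ0.le K)
      _ ≤ Real.exp (-(K:ℝ) / (1 + 2 * Real.sqrt (L/μ - 1)))
          * (b^2*(a^2+b^2) * ‖x₀ - xstar‖^2) :=
          mul_le_mul_of_nonneg_right hpow (by positivity)
      _ = b^2*(a^2+b^2) * (Real.exp (-(K:ℝ) / (1 + 2 * Real.sqrt (L/μ - 1)))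
          * ‖x₀ - xstar‖^2) := by ring
  have hfin : a^2*b^2*(1-θ) * ((a^2 + b^2) * (a + b) / a^3
      * Real.exp (-(K:ℝ) / (1 + 2 * Real.sqrt (L/μ - 1))) * ‖x₀ - xstar‖^2)
      = b^2*(a^2+b^2) * (Real.exp (-(K:ℝ) / (1 + 2 * Real.sqrt (L/μ - 1))) * ‖x₀ - xstar‖^2) := by
    rw [← hc0C]
    ring
  rw [hfin]
  exact hchain
end

section
/- Let C ⊆ E be a nonempty closed convex set, let r : E → ℝ be convex and differentiable, let F : E → ℝ be convex and differentiable, and let μ ≥ 0 be such that F(x') ≥ F(x) + ⟨∇F(x), x' − x⟩ + μ V^r_x(x') for all x, x' ∈ C (relative μ-strong convexity of F with respect to V^r on C). Let g ∈ E, η > 0, x_k ∈ C, and suppose x₊ is a minimizer over C of x ↦ ⟨g, x⟩ + F(x) + (1/η) V^r_{x_k}(x). Then for every x ∈ C: ⟨g, x₊ − x⟩ + F(x₊) − F(x) ≤ (1/η) V^r_{x_k}(x) − (1/η + μ) V^r_{x₊}(x) − (1/η) V^r_{x_k}(x₊). -/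
/-- the mirror-descent lemma. -/
theorem stmt16 {E : Type*} [NormedAddCommGroup E] [InnerProductSpace ℝ E] [CompleteSpace E]
    (C : Set E) (hCne : C.Nonempty) (hCcl : IsClosed C) (hCcv : Convex ℝ C)
    (r : E → ℝ) (r' : E → E) (hrgrad : ∀ x, HasGradientAt r (r' x) x)
    (hrconv : ConvexOn ℝ Set.univ r)
    (F : E → ℝ) (F' : E → E) (hFgrad : ∀ x, HasGradientAt F (F' x) x)
    (hFconv : ConvexOn ℝ Set.univ F)
    (μ : ℝ) (hμ : 0 ≤ μ)
    (hrel : ∀ x ∈ C, ∀ x' ∈ C,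
      F x + (inner ℝ (F' x) (x' - x) : ℝ) + μ * breg r r' x x' ≤ F x')
    (g : E) (η : ℝ) (hη : 0 < η) (xk : E) (hxk : xk ∈ C)
    (xp : E) (hxpC : xp ∈ C)
    (hmin : ∀ x ∈ C,
      (inner ℝ g xp : ℝ) + F xp + 1 / η * breg r r' xk xp
        ≤ (inner ℝ g x : ℝ) + F x + 1 / η * breg r r' xk x) :
    ∀ x ∈ C, (inner ℝ g (xp - x) : ℝ) + F xp - F x
      ≤ 1 / η * breg r r' xk x - (1 / η + μ) * breg r r' xp x
        - 1 / η * breg r r' xk xp := by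
  intro x hx
  set v : E := x - xp with hv
  set L : ℝ → E := fun t => xp + t • v with hL
  have hL0 : L 0 = xp := by simp [hL]
  -- L t ∈ C for t ∈ [0,1]
  have hLC : ∀ t ∈ Set.Icc (0:ℝ) 1, L t ∈ C := by
    intro t ht
    have : L t = (1 - t) • xp + t • x := by
      simp only [hL, hv]
      module
    rw [this]
    exact hCcv hxpC hx (by linarith [ht.2]) ht.1 (by ring)
  -- derivative of L
  have hLd : HasDerivAt L v 0 := by
    have := ((hasDerivAt_id (0:ℝ)).smul_const v).const_add xp
    simp only [one_smul] at this
    exact this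
  -- the objective along the segment
  set ψ : ℝ → ℝ := fun t =>
    (inner ℝ g (L t) : ℝ) + F (L t) + 1 / η * breg r r' xk (L t) with hψ
  set d : ℝ :=
    (inner ℝ g v : ℝ) + (inner ℝ (F' xp) v : ℝ)
      + 1 / η * ((inner ℝ (r' xp) v : ℝ) - (inner ℝ (r' xk) v : ℝ)) with hd
  have hψd : HasDerivAt ψ d 0 := by
    have h1 : HasDerivAt (fun t => (inner ℝ g (L t) : ℝ)) (inner ℝ g v : ℝ) 0 := by
      have h := ((innerSL ℝ g).hasFDerivAt.comp_hasDerivAt 0 hLd)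
      simp at h
      exact h
    have h2 : HasDerivAt (fun t => F (L t)) (inner ℝ (F' xp) v : ℝ) 0 := by
      have hFd : HasFDerivAt F ((InnerProductSpace.toDual ℝ E) (F' xp)) (L 0) :=
        hL0 ▸ (hFgrad xp).hasFDerivAt
      have h := hFd.comp_hasDerivAt 0 hLd
      simp at h
      exact h
    have h3 : HasDerivAt (fun t => r (L t)) (inner ℝ (r' xp) v : ℝ) 0 := by
      have hrd : HasFDerivAt r ((InnerProductSpace.toDual ℝ E) (r' xp)) (L 0) :=
        hL0 ▸ (hrgrad xp).hasFDerivAt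
      have h := hrd.comp_hasDerivAt 0 hLd
      simp at h
      exact h
    have h4 : HasDerivAt (fun t => (inner ℝ (r' xk) (L t - xk) : ℝ))
        (inner ℝ (r' xk) v : ℝ) 0 := by
      have hLd' : HasDerivAt (fun t => L t - xk) v 0 := hLd.sub_const xk
      have h := ((innerSL ℝ (r' xk)).hasFDerivAt.comp_hasDerivAt 0 hLd')
      simp at h
      exact h
    have hb : HasDerivAt (fun t => breg r r' xk (L t))
        ((inner ℝ (r' xp) v : ℝ) - (inner ℝ (r' xk) v : ℝ)) 0 := by
      have h := (h3.sub_const (r xk)).sub h4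
      simp [breg] at h ⊢
      exact h
    have h := (h1.add h2).add (hb.const_mul (1 / η))
    simp [hψ, hd] at h ⊢
    exact h
  -- first-order optimality: 0 ≤ d
  have hmin' : ∀ t ∈ Set.Icc (0:ℝ) 1, ψ 0 ≤ ψ t := by
    intro t ht
    have := hmin (L t) (hLC t ht)
    simpa [hψ, hL0] using this
  have hd0 : 0 ≤ d := by
    have htend : Filter.Tendsto (slope ψ 0) (nhdsWithin 0 (Set.Ioi 0)) (nhds d) :=
      (hasDerivAt_iff_tendsto_slope.mp hψd).mono_left
        (nhdsWithin_mono 0 (fun t ht => ne_of_gt ht))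
    refine ge_of_tendsto htend ?_
    filter_upwards [Ioo_mem_nhdsGT_of_mem (Set.mem_Ico.mpr ⟨le_refl (0:ℝ), one_pos⟩)]
      with t ht
    have h1 : ψ 0 ≤ ψ t := hmin' t ⟨le_of_lt ht.1, le_of_lt ht.2⟩
    have hs : slope ψ 0 t = (ψ t - ψ 0) / t := by simp [slope_def_field]
    rw [hs]
    exact div_nonneg (by linarith) (le_of_lt ht.1)
  -- relative strong convexity at (xp, x)
  have hstr := hrel xp hxpC x hx
  -- algebra
  have e1 : (inner ℝ g (xp - x) : ℝ) = -(inner ℝ g v : ℝ) := by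
    rw [hv, ← inner_neg_right]; rw [neg_sub]
  have e2 : (inner ℝ (r' xk) (x - xk) : ℝ)
      = (inner ℝ (r' xk) v : ℝ) + (inner ℝ (r' xk) (xp - xk) : ℝ) := by
    rw [hv, ← inner_add_right]
    congr 1
    abel
  have hη' : (0:ℝ) < 1 / η := by positivity
  simp only [breg, hv] at hstr hd0 ⊢
  rw [e1, e2] at *
  nlinarith [hd0, hstr, mul_le_mul_of_nonneg_left hd0 (le_of_lt hη')]
end

section
/- Let Y ⊆ E₂ be a nonempty closed convex set, let h : E₂ → ℝ be μy-strongly convex with μy > 0, and let A : E₁ → E₂ be a bounded linear operator. Let x₁, x₂ ∈ E₁ and suppose y₁ is a maximizer over Y of y ↦ ⟨y, A x₁⟩ − h(y) and y₂ is a maximizer over Y of y ↦ ⟨y, A x₂⟩ − h(y). Then ‖y₁ − y₂‖ ≤ (‖A‖/μy) ‖x₁ − x₂‖. -/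
/-- Quadratic growth of a strongly convex function at a constrained minimizer. -/
lemma stmt17_growth {E : Type*} [NormedAddCommGroup E] [InnerProductSpace ℝ E]
    {Y : Set E} (hYcv : Convex ℝ Y) {f : E → ℝ} {μ : ℝ}
    (hf : ConvexOn ℝ Set.univ (fun y => f y - μ / 2 * ‖y‖ ^ 2))
    {z y : E} (hz : z ∈ Y) (hy : y ∈ Y) (hmin : ∀ w ∈ Y, f z ≤ f w) :
    f z + μ / 2 * ‖y - z‖ ^ 2 ≤ f y := by
  have hsf : StrongConvexOn Set.univ μ f := strongConvexOn_iff_convex.mpr hf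
  have key : ∀ t ∈ Set.Ioc (0:ℝ) 1, μ / 2 * ((1 - t) * ‖y - z‖ ^ 2) ≤ f y - f z := by
    intro t ht
    obtain ⟨ht0, ht1⟩ := ht
    have hab : t + (1 - t) = 1 := by ring
    have h1 := hsf.2 (Set.mem_univ y) (Set.mem_univ z) ht0.le (by linarith) hab
    have hmem : t • y + (1 - t) • z ∈ Y := hYcv hy hz ht0.le (by linarith) hab
    have h2 := hmin _ hmem
    have h3 : f z ≤ t * f y + (1 - t) * f z - t * (1 - t) * (μ / 2 * ‖y - z‖ ^ 2) := by
      simpa using h2.trans h1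
    have h4 : t * (μ / 2 * ((1 - t) * ‖y - z‖ ^ 2)) ≤ t * (f y - f z) := by nlinarith
    exact le_of_mul_le_mul_left (by linarith [h4]) ht0
  have htend : Filter.Tendsto (fun t : ℝ => μ / 2 * ((1 - t) * ‖y - z‖ ^ 2))
      (nhdsWithin 0 (Set.Ioi 0)) (nhds (μ / 2 * ‖y - z‖ ^ 2)) := by
    have : Continuous (fun t : ℝ => μ / 2 * ((1 - t) * ‖y - z‖ ^ 2)) := by continuity
    have := this.tendsto 0
    simpa using this.mono_left nhdsWithin_le_nhds
  have hev : ∀ᶠ t in nhdsWithin (0:ℝ) (Set.Ioi 0),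
      μ / 2 * ((1 - t) * ‖y - z‖ ^ 2) ≤ f y - f z :=
    Filter.eventually_of_mem (Ioc_mem_nhdsGT_of_mem (by norm_num : (0:ℝ) ∈ Set.Ico 0 1)) key
  linarith [le_of_tendsto htend hev]

/-- the argmax of a μy-strongly concave objective y ↦ ⟨y, Ax⟩ − h(y)
over a closed convex set is (‖A‖/μy)-Lipschitz in x. -/
theorem stmt17 {E₁ E₂ : Type*}
    [NormedAddCommGroup E₁] [InnerProductSpace ℝ E₁] [CompleteSpace E₁]
    [NormedAddCommGroup E₂] [InnerProductSpace ℝ E₂] [CompleteSpace E₂]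
    (Y : Set E₂) (hYne : Y.Nonempty) (hYcl : IsClosed Y) (hYcv : Convex ℝ Y)
    (h : E₂ → ℝ) (μy : ℝ) (hμy : 0 < μy)
    (hsc : ConvexOn ℝ Set.univ (fun y => h y - μy / 2 * ‖y‖ ^ 2))
    (A : E₁ →L[ℝ] E₂) (x₁ x₂ : E₁) (y₁ y₂ : E₂)
    (hy₁ : y₁ ∈ Y) (hy₂ : y₂ ∈ Y)
    (hmax₁ : ∀ y ∈ Y, (inner ℝ y (A x₁) : ℝ) - h y ≤ (inner ℝ y₁ (A x₁) : ℝ) - h y₁)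
    (hmax₂ : ∀ y ∈ Y, (inner ℝ y (A x₂) : ℝ) - h y ≤ (inner ℝ y₂ (A x₂) : ℝ) - h y₂) :
    ‖y₁ - y₂‖ ≤ ‖A‖ / μy * ‖x₁ - x₂‖ := by
  -- fᵢ y = h y - ⟪y, A xᵢ⟫ is μy-strongly convex; yᵢ minimizes fᵢ over Y
  have hlin : ∀ c : E₂, ConvexOn ℝ (Set.univ : Set E₂) (fun y : E₂ => -(inner ℝ y c : ℝ)) := by
    intro c
    refine ⟨convex_univ, fun x _ y _ a b ha hb hab => le_of_eq ?_⟩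
    simp [inner_add_left, real_inner_smul_left, smul_eq_mul]
    ring
  have hconv : ∀ c : E₂, ConvexOn ℝ (Set.univ : Set E₂)
      (fun y : E₂ => (h y - (inner ℝ y c : ℝ)) - μy / 2 * ‖y‖ ^ 2) := by
    intro c
    have h1 := hsc.add (hlin c)
    refine h1.congr ?_
    intro y _
    simp only [Pi.add_apply]
    ring
  have g₁ := stmt17_growth hYcv (hconv (A x₁)) hy₁ hy₂
    (fun w hw => by linarith [hmax₁ w hw])
  have g₂ := stmt17_growth hYcv (hconv (A x₂)) hy₂ hy₁
    (fun w hw => by linarith [hmax₂ w hw])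
  -- adding: μy * ‖y₁ - y₂‖² ≤ ⟪y₁ - y₂, A (x₁ - x₂)⟫
  have hkey : μy * ‖y₁ - y₂‖ ^ 2 ≤ (inner ℝ (y₁ - y₂) (A (x₁ - x₂)) : ℝ) := by
    have e1 : ‖y₂ - y₁‖ = ‖y₁ - y₂‖ := norm_sub_rev _ _
    have e2 : (inner ℝ (y₁ - y₂) (A (x₁ - x₂)) : ℝ)
        = (inner ℝ y₁ (A x₁) : ℝ) - (inner ℝ y₁ (A x₂) : ℝ)
          - (inner ℝ y₂ (A x₁) : ℝ) + (inner ℝ y₂ (A x₂) : ℝ) := by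
      simp [inner_sub_left, inner_sub_right, map_sub]
      ring
    rw [e1] at g₁
    rw [e2]
    nlinarith [g₁, g₂]
  have hbound : (inner ℝ (y₁ - y₂) (A (x₁ - x₂)) : ℝ) ≤ ‖y₁ - y₂‖ * (‖A‖ * ‖x₁ - x₂‖) := by
    calc (inner ℝ (y₁ - y₂) (A (x₁ - x₂)) : ℝ) ≤ ‖y₁ - y₂‖ * ‖A (x₁ - x₂)‖ :=
          real_inner_le_norm _ _
      _ ≤ ‖y₁ - y₂‖ * (‖A‖ * ‖x₁ - x₂‖) := by
          gcongr; exact A.le_opNorm _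
  rcases eq_or_ne (y₁ - y₂) 0 with hd | hd
  · rw [hd, norm_zero]
    positivity
  · have hdpos : 0 < ‖y₁ - y₂‖ := norm_pos_iff.mpr hd
    rw [div_mul_eq_mul_div, le_div_iff₀ hμy]
    have : μy * ‖y₁ - y₂‖ ^ 2 ≤ ‖y₁ - y₂‖ * (‖A‖ * ‖x₁ - x₂‖) := hkey.trans hbound
    nlinarith
end
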